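/- arXiv:0903.1756 — 3 statements merged into one kernel-verified Lean document; each statement's English description precedes it below -/
import Mathlib

section
/- Fix 0 ≤ i < I, an edge g ∉ B_{≤i}, and an odd integer l ≥ 1. (a) On the event {g ∈ B_{i+1} and TF_i ∪ {g} is triangle-free}: the event A_{g,l} implies the event {g ∈ TF_{i+1}}, which in turn implies the event A_{g,l+1}. (b) On the event {g ∉ B_{≤i+1} and TF_i ∪ {g} is triangle-free}: the event A_{g,l} implies the event {TF_{i+1} ∪ {g} is triangle-free}, which in turn implies the event A_{g,l+1}. -/
open MeasureTheory Finset Filter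

namespace TF

noncomputable section
open scoped Classical

/-- Edges of the complete graph on `Fin n` are elements of `Sym2 (Fin n)`. -/
abbrev Edge (n : ℕ) := Sym2 (Fin n)

/-- The edge set of the complete graph `K_n` (non-diagonal pairs). -/
def allEdges (n : ℕ) : Finset (Edge n) := Finset.univ.filter (fun e => ¬ e.IsDiag)

/-- Three edges form a triangle. -/
def IsTri {n : ℕ} (e f g : Edge n) : Prop :=
  ∃ a b c : Fin n, a ≠ b ∧ b ≠ c ∧ a ≠ c ∧ e = s(a, b) ∧ f = s(b, c) ∧ g = s(a, c)

/-- An edge set is triangle-free. -/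
def TriFree {n : ℕ} (T : Finset (Edge n)) : Prop :=
  ∀ e ∈ T, ∀ f ∈ T, ∀ g ∈ T, ¬ IsTri e f g

/-- Adding `e` to `T` does not create a triangle. -/
def AddOK {n : ℕ} (T : Finset (Edge n)) (e : Edge n) : Prop :=
  ∀ f ∈ T, ∀ g ∈ T, ¬ IsTri e f g

/-- Traverse a list of edges, adding each to the current graph unless
its addition creates a triangle (or it is a loop). -/
def greedy {n : ℕ} (T : Finset (Edge n)) : List (Edge n) → Finset (Edge n)
  | [] => T
  | e :: l => if AddOK T e ∧ ¬ e.IsDiag then greedy (insert e T) l else greedy T l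

/-- The edges of `s`, listed in increasing order of birthtime. -/
def sortByBirth {n : ℕ} (β : Edge n → ℝ) (s : Finset (Edge n)) : List (Edge n) :=
  s.toList.mergeSort (fun a b => β a ≤ β b)

/-- `δ := 1/⌊n^ε⌋`. -/
def del (n : ℕ) (ε : ℝ) : ℝ := 1 / (⌊(n : ℝ) ^ ε⌋₊ : ℝ)

/-- `I := δ^{-2} = ⌊n^ε⌋²`. -/
def Inat (n : ℕ) (ε : ℝ) : ℕ := (⌊(n : ℝ) ^ ε⌋₊) ^ 2

/-- `M := n^{20000ε}`. -/
def Mc (n : ℕ) (ε : ℝ) : ℝ := (n : ℝ) ^ (20000 * ε)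

/-- The imaginary error function `erfi(x) = (2/√π)∫₀ˣ exp(t²) dt`. -/
def erfi (x : ℝ) : ℝ := (2 / Real.sqrt Real.pi) * ∫ t in (0:ℝ)..x, Real.exp (t ^ 2)

/-- `Φ` is the inverse function of `y ↦ (√π/2)·erfi y`; equivalently it is the
solution of `Φ(0) = 0`, `Φ'(x) = exp (-Φ(x)²)`. -/
def Phi : ℝ → ℝ := Function.invFun (fun y : ℝ => (Real.sqrt Real.pi / 2) * erfi y)

/-- `φ(x) := exp (-Φ(x)²)`, the derivative of `Φ`. -/
def phi (x : ℝ) : ℝ := Real.exp (-(Phi x) ^ 2)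

/-- `m := ⌊n^{100ε}⌋·φ(iδ)⁻¹`. -/
def mc (n : ℕ) (ε : ℝ) (i : ℕ) : ℝ := (⌊(n : ℝ) ^ (100 * ε)⌋₊ : ℝ) * (phi (i * del n ε))⁻¹

/-- `γ(i) := max{δΦ(iδ)φ(iδ), δ²φ(iδ)²}`. -/
def gam (n : ℕ) (ε : ℝ) (i : ℕ) : ℝ :=
  max (del n ε * Phi (i * del n ε) * phi (i * del n ε))
      (del n ε ^ 2 * phi (i * del n ε) ^ 2)

/-- `Γ(0) := n^{-30ε}`, `Γ(i) := Γ(i-1)(1 + 10γ(i-1))`. -/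
def Gam (n : ℕ) (ε : ℝ) : ℕ → ℝ
  | 0 => (n : ℝ) ^ (-30 * ε)
  | i + 1 => Gam n ε i * (1 + 10 * gam n ε i)

/-- `x = a(1 ± b)`, i.e. `a(1-b) ≤ x ≤ a(1+b)`. -/
def within (x a b : ℝ) : Prop := a * (1 - b) ≤ x ∧ x ≤ a * (1 + b)

/-- The uniform probability measure on a set of reals. -/
def unif (s : Set ℝ) : Measure ℝ := (volume s)⁻¹ • volume.restrict s

/-- The product measure under which every edge of `K_n` receives an
independent uniform birthtime in `[0,1]`. -/
def stepMeasure (n : ℕ) : Measure (Edge n → ℝ) :=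
  Measure.pi fun _ => unif (Set.Icc 0 1)

/-- `Λ₀(g,i)`: pairs `{g₁,g₂} ⊆ TF_i` forming a triangle with `g`. -/
def Lam0 {n : ℕ} (TFi : Finset (Edge n)) (g : Edge n) : Finset (Finset (Edge n)) :=
  (TFi.powersetCard 2).filter
    (fun P => ∃ g1 ∈ P, ∃ g2 ∈ P, g1 ≠ g2 ∧ IsTri g g1 g2)

/-- `Λ₁(g,i)`: singletons (identified with edges) `g₁ ∉ B_{≤i}` such that some
`g₂ ∈ TF_i` makes `{g,g₁,g₂}` a triangle and `TF_i ∪ {g₁}` is triangle-free. -/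
def Lam1 {n : ℕ} (TFi Bprev : Finset (Edge n)) (g : Edge n) : Finset (Edge n) :=
  (allEdges n \ Bprev).filter
    (fun g1 => (∃ g2 ∈ TFi, IsTri g g1 g2) ∧ TriFree (insert g1 TFi))

/-- `Λ₂(g,i)`: pairs `{g₁,g₂} ⊆ K_n ∖ B_{≤i}` forming a triangle with `g`
such that `TF_i ∪ {g_j}` is triangle-free for both `j ∈ {1,2}`. -/
def Lam2 {n : ℕ} (TFi Bprev : Finset (Edge n)) (g : Edge n) : Finset (Finset (Edge n)) :=
  ((allEdges n \ Bprev).powersetCard 2).filter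
    (fun P => (∃ g1 ∈ P, ∃ g2 ∈ P, g1 ≠ g2 ∧ IsTri g g1 g2) ∧
      ∀ f ∈ P, TriFree (insert f TFi))

/-- The process is well-behaved at step `i` (the precondition of the
key lemma), for a given instance `(TF_i, B_{≤i})`. -/
def WellBehaved (n : ℕ) (ε : ℝ) (i : ℕ) (TFi Bprev : Finset (Edge n)) : Prop :=
  (∀ g ∈ allEdges n, ((Lam0 TFi g).card : ℝ) ≤ i * (n : ℝ) ^ (5 * ε) ∧
      ((Lam1 TFi Bprev g).card : ℝ) ≤ i * Real.sqrt n) ∧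
  (∀ g ∈ allEdges n \ Bprev,
    within ((Lam1 TFi Bprev g).card : ℝ)
      (2 * Real.sqrt n * Phi (i * del n ε) * phi (i * del n ε)) (Gam n ε i) ∧
    within ((Lam2 TFi Bprev g).card : ℝ)
      ((n : ℝ) * phi (i * del n ε) ^ 2) (Gam n ε i))

/-- Structural properties of any instance of the state `(TF_i, B_{≤i})` of the
process: `TF_i ⊆ B_{≤i} ⊆ K_n` and `TF_i` is triangle-free. -/
def Instance (n : ℕ) (TFi Bprev : Finset (Edge n)) : Prop :=
  TFi ⊆ Bprev ∧ Bprev ⊆ allEdges n ∧ TriFree TFi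

/-- The set `B_{i+1}` determined by the fresh birthtimes `β = β_{i+1}`. -/
def Bnext (n : ℕ) (ε : ℝ) (Bprev : Finset (Edge n)) (β : Edge n → ℝ) : Finset (Edge n) :=
  (allEdges n \ Bprev).filter (fun f => β f < del n ε * (n : ℝ) ^ (-(1:ℝ)/2))

/-- The graph `TF_{i+1}`, obtained by traversing the edges of `B_{i+1}` in
increasing order of birthtime, adding each unless a triangle is created. -/
def TFnext (n : ℕ) (ε : ℝ) (TFi Bprev : Finset (Edge n)) (β : Edge n → ℝ) : Finset (Edge n) :=
  greedy TFi (sortByBirth β (Bnext n ε Bprev β))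

/-- `B^⋆_{i+1}` as a function of the birthtimes: the edges outside `B_{≤i}`
with birthtime below `M·n^{-1/2}`. -/
def BstarOf (n : ℕ) (ε : ℝ) (Bprev : Finset (Edge n)) (β : Edge n → ℝ) : Finset (Edge n) :=
  (allEdges n \ Bprev).filter (fun f => β f < Mc n ε * (n : ℝ) ^ (-(1:ℝ)/2))

/-- `B^*_{i+1}` as a function of the birthtimes: the edges outside `B_{≤i}`
with birthtime below `m·n^{-1/2}`. -/
def BsubOf (n : ℕ) (ε : ℝ) (i : ℕ) (Bprev : Finset (Edge n)) (β : Edge n → ℝ) : Finset (Edge n) :=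
  (allEdges n \ Bprev).filter (fun f => β f < mc n ε i * (n : ℝ) ^ (-(1:ℝ)/2))

/-- `Λ^⋆₁`-type family: members of `Λ₁` contained in the selected edge set. -/
def LamS1 {n : ℕ} (TFi Bprev Bsel : Finset (Edge n)) (g : Edge n) : Finset (Edge n) :=
  (Lam1 TFi Bprev g).filter (fun e => e ∈ Bsel)

/-- `Λ^⋆₂`-type family: members of `Λ₂` contained in the selected edge set. -/
def LamS2 {n : ℕ} (TFi Bprev Bsel : Finset (Edge n)) (g : Edge n) : Finset (Finset (Edge n)) :=
  (Lam2 TFi Bprev g).filter (fun P => P ⊆ Bsel)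

/-- `Λ^{⋆⋆}₂`: members of `Λ₂` meeting the selected edge set in one edge. -/
def LamSS2 {n : ℕ} (TFi Bprev Bsel : Finset (Edge n)) (g : Edge n) : Finset (Finset (Edge n)) :=
  (Lam2 TFi Bprev g).filter (fun P => (P ∩ Bsel).card = 1)

/-- The event `E^⋆(h)`: properties P1–P4. -/
def Estar (n : ℕ) (ε : ℝ) (i : ℕ) (TFi Bprev Bstar : Finset (Edge n)) (h : ℝ) : Prop :=
  (∀ g ∈ allEdges n \ Bprev,
    within ((LamS1 TFi Bprev Bstar g).card : ℝ)
      (2 * Mc n ε * Phi (i * del n ε) * phi (i * del n ε))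
      (Gam n ε i + h * Gam n ε i * gam n ε i) ∧
    within ((LamS2 TFi Bprev Bstar g).card : ℝ)
      (Mc n ε ^ 2 * phi (i * del n ε) ^ 2)
      (Gam n ε i + h * Gam n ε i * gam n ε i) ∧
    within ((LamSS2 TFi Bprev Bstar g).card : ℝ)
      (2 * Mc n ε * Real.sqrt n * phi (i * del n ε) ^ 2)
      (Gam n ε i + h * Gam n ε i * gam n ε i)) ∧
  (∀ w x y : Fin n, w ≠ x → x ≠ y → w ≠ y →
    s(w, x) ∉ Bprev → s(x, y) ∉ Bprev →
    (((Finset.univ.filter (fun z : Fin n => z ≠ w ∧ z ≠ x ∧ z ≠ y ∧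
        s(w, z) ∈ TFi ∧ s(y, z) ∈ TFi ∧ s(x, z) ∈ Bstar)).card : ℝ) ≤ Real.log n ^ 2 ∧
     ((Finset.univ.filter (fun z : Fin n => z ≠ w ∧ z ≠ x ∧ z ≠ y ∧
        s(w, z) ∈ TFi ∧ s(x, z) ∈ Bstar ∧ s(y, z) ∈ Bstar)).card : ℝ) ≤ Real.log n ^ 2 ∧
     ((Finset.univ.filter (fun z : Fin n => z ≠ w ∧ z ≠ x ∧ z ≠ y ∧
        s(w, z) ∈ TFi ∧ s(x, z) ∉ Bprev ∧ s(y, z) ∈ Bstar)).card : ℝ) ≤ Mc n ε ^ 2)) ∧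
  (∀ x y : Fin n, x ≠ y →
    ((Finset.univ.filter (fun z : Fin n => z ≠ x ∧ z ≠ y ∧
        s(x, z) ∈ Bstar ∧ s(y, z) ∈ Bstar)).card : ℝ) ≤ 2 * Mc n ε ^ 2) ∧
  (∀ x : Fin n,
    ((Finset.univ.filter (fun y : Fin n => y ≠ x ∧ s(x, y) ∈ Bstar)).card : ℝ)
      ≤ 2 * Mc n ε * Real.sqrt n)

/-- The children (labeled by sets of edges) of a tree node labeled `g` whose
grandparent is labeled `prev`, in the tree built from the selected edge set
`Bsel` (`Bsel = B^⋆_{i+1}` gives `T^⋆`, `Bsel = B^*_{i+1}` gives `T^*`). -/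
def childSets {n : ℕ} (TFi Bprev Bsel : Finset (Edge n)) (g : Edge n) :
    Option (Edge n) → Finset (Finset (Edge n))
  | none => (LamS1 TFi Bprev Bsel g).image (fun e => {e}) ∪ LamS2 TFi Bprev Bsel g
  | some g' => ((LamS2 TFi Bprev Bsel g).filter (fun G => g' ∉ G)) ∪
      ((LamS1 TFi Bprev Bsel g).filter
        (fun e => e ≠ g' ∧ ¬ IsTri e g g')).image (fun e => {e})

/-- Survival of a tree node labeled `g` with grandparent label `prev`, when
the birthtime of the node's label is `b` and `l` further generations follow:
a non-leaf node survives iff for every child `G` all of whose edges have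
birthtime below `min{b, δn^{-1/2}}`, some child of `G` does not survive. -/
def surv (n : ℕ) (ε : ℝ) (TFi Bprev Bsel : Finset (Edge n)) (β : Edge n → ℝ) :
    ℕ → Edge n → Option (Edge n) → ℝ → Prop
  | 0, _, _, _ => True
  | l + 1, g, prev, b => ∀ G ∈ childSets TFi Bprev Bsel g prev,
      (∀ f ∈ G, β f < min b (del n ε * (n : ℝ) ^ (-(1:ℝ)/2))) →
      ∃ f ∈ G, ¬ surv n ε TFi Bprev Bsel β l f (some g) (β f)

/-- The event `A_{g,l}`: the root of `T_{g,l}` survives. -/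
def Aev (n : ℕ) (ε : ℝ) (TFi Bprev Bsel : Finset (Edge n)) (β : Edge n → ℝ)
    (l : ℕ) (g : Edge n) : Prop :=
  surv n ε TFi Bprev Bsel β l g none (β g)

/-- The event `A_{F,l} := ∩_{f ∈ F} A_{f,l}`. -/
def AevF (n : ℕ) (ε : ℝ) (TFi Bprev Bsel : Finset (Edge n)) (β : Edge n → ℝ)
    (l : ℕ) (F : Finset (Edge n)) : Prop :=
  ∀ f ∈ F, Aev n ε TFi Bprev Bsel β l f

/-- The conditional distribution of the birthtimes `β_{i+1}` given that
`B^⋆_{i+1} = Bstar` was chosen, that the edges of `F1` fall in `B_{i+1}`,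
and that the edges of `Fex` do not fall in `B_{i+1}`. -/
def condM (n : ℕ) (ε : ℝ) (Bprev Bstar F1 Fex : Finset (Edge n)) : Measure (Edge n → ℝ) :=
  Measure.pi fun e =>
    if e ∈ F1 then unif (Set.Ico 0 (del n ε * (n : ℝ) ^ (-(1:ℝ)/2)))
    else if e ∈ Fex then
      (if e ∈ Bstar then
          unif (Set.Ico (del n ε * (n : ℝ) ^ (-(1:ℝ)/2)) (Mc n ε * (n : ℝ) ^ (-(1:ℝ)/2)))
        else unif (Set.Ioc (Mc n ε * (n : ℝ) ^ (-(1:ℝ)/2)) 1))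
    else if e ∈ Bstar then unif (Set.Ico 0 (Mc n ε * (n : ℝ) ^ (-(1:ℝ)/2)))
    else if e ∈ Bprev then unif (Set.Icc 0 1)
    else unif (Set.Ioc (Mc n ε * (n : ℝ) ^ (-(1:ℝ)/2)) 1)

/-- As `condM`, but additionally given that `B^*_{i+1} = Bsub` was chosen. -/
def condM2 (n : ℕ) (ε : ℝ) (i : ℕ) (Bprev Bstar Bsub F1 Fex : Finset (Edge n)) :
    Measure (Edge n → ℝ) :=
  Measure.pi fun e =>
    if e ∈ F1 then unif (Set.Ico 0 (del n ε * (n : ℝ) ^ (-(1:ℝ)/2)))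
    else if e ∈ Fex then
      (if e ∈ Bsub then
          unif (Set.Ico (del n ε * (n : ℝ) ^ (-(1:ℝ)/2)) (mc n ε i * (n : ℝ) ^ (-(1:ℝ)/2)))
        else if e ∈ Bstar then
          unif (Set.Ico (mc n ε i * (n : ℝ) ^ (-(1:ℝ)/2)) (Mc n ε * (n : ℝ) ^ (-(1:ℝ)/2)))
        else unif (Set.Ioc (Mc n ε * (n : ℝ) ^ (-(1:ℝ)/2)) 1))
    else if e ∈ Bsub then unif (Set.Ico 0 (mc n ε i * (n : ℝ) ^ (-(1:ℝ)/2)))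
    else if e ∈ Bstar then
      unif (Set.Ico (mc n ε i * (n : ℝ) ^ (-(1:ℝ)/2)) (Mc n ε * (n : ℝ) ^ (-(1:ℝ)/2)))
    else if e ∈ Bprev then unif (Set.Icc 0 1)
    else unif (Set.Ioc (Mc n ε * (n : ℝ) ^ (-(1:ℝ)/2)) 1)

/-- A descending path of labels from a (root) node labeled `g` whose
grandparent label is `prev`: each step records the label of a set-node
together with the label of one of its edge-children. -/
def chain {n : ℕ} (TFi Bprev Bsel : Finset (Edge n)) :
    Edge n → Option (Edge n) → List (Finset (Edge n) × Edge n) → Prop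
  | _, _, [] => True
  | g, prev, (G, g') :: rest =>
      G ∈ childSets TFi Bprev Bsel g prev ∧ g' ∈ G ∧ chain TFi Bprev Bsel g' (some g) rest

/-- The (edge) label of the node-at-even-distance reached by a path. -/
def lbl {n : ℕ} (f : Edge n) (path : List (Finset (Edge n) × Edge n)) : Edge n :=
  (path.map Prod.snd).getLastD f

/-- The label of the grandparent of the node reached by a path. -/
def prevLbl {n : ℕ} (f : Edge n) (path : List (Finset (Edge n) × Edge n)) : Option (Edge n) :=
  if path.isEmpty then none else some (lbl f path.dropLast)

/-- The event `E^*_F`: an edge labeling a node at even distance from the root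
of a tree of `T^*_{F,L}` labels no other such node. -/
def EstarF (n : ℕ) (TFi Bprev Bsub : Finset (Edge n)) (L : ℕ) (F : Finset (Edge n)) : Prop :=
  ∀ f ∈ F, ∀ f' ∈ F, ∀ path path' : List (Finset (Edge n) × Edge n),
    chain TFi Bprev Bsub f none path → chain TFi Bprev Bsub f' none path' →
    path.length ≤ L → path'.length ≤ L →
    lbl f path = lbl f' path' → f = f' ∧ path = path'

/-- The event `E^*`. -/
def EstarSub (n : ℕ) (ε : ℝ) (i : ℕ) (TFi Bprev Bsub : Finset (Edge n)) : Prop :=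
  ∀ g ∈ allEdges n \ Bprev,
    within ((LamS1 TFi Bprev Bsub g).card : ℝ)
      (2 * mc n ε i * Phi (i * del n ε) * phi (i * del n ε)) (1.01 * Gam n ε i) ∧
    within ((LamS2 TFi Bprev Bsub g).card : ℝ)
      (mc n ε i ^ 2 * phi (i * del n ε) ^ 2) (1.01 * Gam n ε i)

/-- The iterates `p_l` of the limiting survival recursion (with `c1 = φ(iδ)`
and `c2 = Φ(iδ)`): `p₀ ≡ 1` and
`p_{l+1}(x) = exp(-P_l(x)²c₁² - 2P_l(x)c₂c₁)` where `P_l(x) := ∫₀ˣ p_l`. -/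
def plim (c1 c2 : ℝ) : ℕ → ℝ → ℝ
  | 0 => fun _ => 1
  | l + 1 => fun x =>
      Real.exp (-(∫ y in (0:ℝ)..x, plim c1 c2 l y) ^ 2 * c1 ^ 2 -
        2 * (∫ y in (0:ℝ)..x, plim c1 c2 l y) * c2 * c1)

/-- The staged triangle-free process: `stage i = (TF_i, B_{≤i})`. -/
def stage (n : ℕ) (ε : ℝ) (β : ℕ → Edge n → ℝ) : ℕ → Finset (Edge n) × Finset (Edge n)
  | 0 => (∅, ∅)
  | i + 1 =>
      let p := stage n ε β i
      (TFnext n ε p.1 p.2 (β (i + 1)), p.2 ∪ Bnext n ε p.2 (β (i + 1)))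

/-- The sample space for the stages `0,…,I` of the process: independent
uniform birthtimes in `[0,1]` for every stage and every edge. -/
def stagesMeasure (n : ℕ) (ε : ℝ) : Measure (Fin (Inat n ε + 1) → Edge n → ℝ) :=
  Measure.pi fun _ => stepMeasure n

/-- Extend a finitely-indexed family of birthtimes to all stages. -/
def extendB (n : ℕ) (ε : ℝ) (ω : Fin (Inat n ε + 1) → Edge n → ℝ) : ℕ → Edge n → ℝ :=
  fun k => if h : k < Inat n ε + 1 then ω ⟨k, h⟩ else fun _ => 0

/-- `TF_I` as a function of the birthtimes. -/
def TFI (n : ℕ) (ε : ℝ) (ω : Fin (Inat n ε + 1) → Edge n → ℝ) : Finset (Edge n) :=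
  (stage n ε (extendB n ε ω) (Inat n ε)).1

/-- The final graph `TF(n)` of the (one-shot) triangle-free process. -/
def TFone (n : ℕ) (β : Edge n → ℝ) : Finset (Edge n) :=
  greedy ∅ (sortByBirth β (allEdges n))

/-- `TF(n,p) := TF(n) ∩ {f : β(f) ≤ p}`. -/
def TFnp (n : ℕ) (β : Edge n → ℝ) (p : ℝ) : Finset (Edge n) :=
  (TFone n β).filter (fun f => β f ≤ p)

/-- `Fn` is a copy of the graph `F` inside `K_n`. -/
def IsCopy {V : Type*} (F : SimpleGraph V) {n : ℕ} (Fn : Finset (Edge n)) : Prop :=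
  ∃ φ : V → Fin n, Function.Injective φ ∧
    (∀ e, e ∈ Fn ↔ ∃ a b, F.Adj a b ∧ e = s(φ a, φ b))

/-- The number of copies of `F` in the graph on `Fin n` with edge set `T`
(= #{injective adjacency-preserving maps} / #{automorphisms of F}). -/
def numCopies {V : Type*} [Fintype V] (F : SimpleGraph V) {n : ℕ} (T : Finset (Edge n)) : ℝ :=
  (Nat.card {φ : V → Fin n // Function.Injective φ ∧
      ∀ a b, F.Adj a b → s(φ a, φ b) ∈ T} : ℝ) / (Nat.card (F ≃g F) : ℝ)

/-- The number of edges `e_F` of a graph `F`. -/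
def eCard {V : Type*} (F : SimpleGraph V) : ℕ := Nat.card F.edgeSet

/-- `F` is balanced: `e_F/v_F ≥ e_H/v_H` for every subgraph `H ⊆ F`
with at least one vertex. -/
def Balanced {V : Type*} [Fintype V] (F : SimpleGraph V) : Prop :=
  ∀ H : F.Subgraph, H.verts.Nonempty →
    (Nat.card H.edgeSet : ℝ) / (Nat.card H.verts : ℝ) ≤
      (eCard F : ℝ) / (Fintype.card V : ℝ)

end

end TF

namespace TF
noncomputable section
open scoped Classical

/-! ### Auxiliary lemmas -/

lemma IsTri.ne12 {n : ℕ} {e f g : Edge n} (h : IsTri e f g) : e ≠ f := by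
  obtain ⟨a, b, c, hab, hbc, hac, he, hf, hg⟩ := h
  subst he hf
  intro hef
  rw [Sym2.eq_iff] at hef
  rcases hef with ⟨h1, h2⟩ | ⟨h1, h2⟩
  · exact hab h1
  · exact hac h1

lemma IsTri.ne13 {n : ℕ} {e f g : Edge n} (h : IsTri e f g) : e ≠ g := by
  obtain ⟨a, b, c, hab, hbc, hac, he, hf, hg⟩ := h
  subst he hg
  intro hef
  rw [Sym2.eq_iff] at hef
  rcases hef with ⟨h1, h2⟩ | ⟨h1, h2⟩
  · exact hbc h2
  · exact hac h1

lemma IsTri.ne23 {n : ℕ} {e f g : Edge n} (h : IsTri e f g) : f ≠ g := by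
  obtain ⟨a, b, c, hab, hbc, hac, he, hf, hg⟩ := h
  subst hf hg
  intro hef
  rw [Sym2.eq_iff] at hef
  rcases hef with ⟨h1, h2⟩ | ⟨h1, h2⟩
  · exact hab h1.symm
  · exact hbc h1

lemma IsTri.swap12 {n : ℕ} {e f g : Edge n} (h : IsTri e f g) : IsTri f e g := by
  obtain ⟨a, b, c, hab, hbc, hac, he, hf, hg⟩ := h
  exact ⟨c, b, a, hbc.symm, hab.symm, hac.symm,
    by rw [hf, Sym2.eq_swap], by rw [he, Sym2.eq_swap], by rw [hg, Sym2.eq_swap]⟩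

lemma IsTri.swap23 {n : ℕ} {e f g : Edge n} (h : IsTri e f g) : IsTri e g f := by
  obtain ⟨a, b, c, hab, hbc, hac, he, hf, hg⟩ := h
  exact ⟨b, a, c, hab.symm, hac, hbc, by rw [he, Sym2.eq_swap], hg, hf⟩

/-- two edges of a triangle determine the third. -/
lemma IsTri.third_unique {n : ℕ} {e f g g' : Edge n} (h : IsTri e f g)
    (h' : IsTri e f g') : g = g' := by
  obtain ⟨a, b, c, hab, hbc, hac, he, hf, hg⟩ := h
  obtain ⟨a', b', c', hab', hbc', hac', he', hf', hg'⟩ := h'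
  subst he hf hg hg'
  rw [Sym2.eq_iff] at he' hf'
  rcases he' with ⟨ha, hb⟩ | ⟨ha, hb⟩
  · subst ha; subst hb
    rcases hf' with ⟨h1, h2⟩ | ⟨h1, h2⟩
    · subst h2; rfl
    · exact absurd h2.symm hbc
  · subst ha; subst hb
    rcases hf' with ⟨h1, h2⟩ | ⟨h1, h2⟩
    · exact absurd h1.symm hab
    · exact absurd h2 (Ne.symm hac)

lemma TriFree.mono {n : ℕ} {S T : Finset (Edge n)} (hST : S ⊆ T) (hT : TriFree T) :
    TriFree S := fun e he f hf g hg => hT e (hST he) f (hST hf) g (hST hg)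

lemma triFree_insert_iff {n : ℕ} {T : Finset (Edge n)} {e : Edge n} (hT : TriFree T) :
    TriFree (insert e T) ↔ ∀ f ∈ T, ∀ g ∈ T, ¬ IsTri e f g := by
  constructor
  · intro h f hf g hg
    exact h e (Finset.mem_insert_self e T) f (Finset.mem_insert_of_mem hf)
      g (Finset.mem_insert_of_mem hg)
  · intro h x hx y hy z hz htri
    rcases Finset.mem_insert.1 hx with hxe | hx
    · rcases Finset.mem_insert.1 hy with hye | hy
      · exact htri.ne12 (hxe.trans hye.symm)
      · rcases Finset.mem_insert.1 hz with hze | hz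
        · exact htri.ne13 (hxe.trans hze.symm)
        · exact h y hy z hz (hxe ▸ htri)
    · rcases Finset.mem_insert.1 hy with hye | hy
      · rcases Finset.mem_insert.1 hz with hze | hz
        · exact htri.ne23 (hye.trans hze.symm)
        · exact h x hx z hz (hye ▸ htri.swap12)
      · rcases Finset.mem_insert.1 hz with hze | hz
        · exact h x hx y hy (hze ▸ htri.swap23.swap12)
        · exact hT x hx y hy z hz htri

lemma greedy_spec {n : ℕ} (β : Edge n → ℝ) (hβ : Function.Injective β)
    (L : List (Edge n)) (T : Finset (Edge n))
    (hsort : L.Pairwise (fun a b => β a ≤ β b)) (hnd : L.Nodup)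
    (hmem : ∀ e ∈ L, e ∉ T ∧ ¬ e.IsDiag) (hT : TriFree T) :
    T ⊆ greedy T L ∧ (∀ e ∈ greedy T L, e ∈ T ∨ e ∈ L) ∧ TriFree (greedy T L) ∧
    ∀ f ∈ L, (f ∈ greedy T L ↔ ∀ g1 ∈ greedy T L, ∀ g2 ∈ greedy T L,
      (g1 ∈ T ∨ β g1 < β f) → (g2 ∈ T ∨ β g2 < β f) → ¬ IsTri f g1 g2) := by
  induction L generalizing T with
  | nil => exact ⟨Finset.Subset.refl T, fun e he => Or.inl he, hT, by simp⟩
  | cons e L' ih =>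
    have heL' : e ∉ L' := (List.nodup_cons.1 hnd).1
    have hndL' : L'.Nodup := (List.nodup_cons.1 hnd).2
    have hsortL' : L'.Pairwise (fun a b => β a ≤ β b) := hsort.of_cons
    have hlt : ∀ f ∈ L', β e < β f := fun f hf =>
      lt_of_le_of_ne (List.rel_of_pairwise_cons hsort hf)
        (fun h => heL' (hβ h ▸ hf))
    have heT : e ∉ T := (hmem e (List.mem_cons_self (a := e) (l := L'))).1
    have heD : ¬ e.IsDiag := (hmem e (List.mem_cons_self (a := e) (l := L'))).2
    by_cases hacc : AddOK T e ∧ ¬ e.IsDiag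
    · have hstep : greedy T (e :: L') = greedy (insert e T) L' := by
        rw [greedy, if_pos hacc]
      have hT' : TriFree (insert e T) := (triFree_insert_iff hT).2 hacc.1
      have hmem' : ∀ f ∈ L', f ∉ insert e T ∧ ¬ f.IsDiag := fun f hf =>
        ⟨fun hmemf => by
          rcases Finset.mem_insert.1 hmemf with h | h
          · exact heL' (h ▸ hf)
          · exact (hmem f (List.mem_cons_of_mem e hf)).1 h,
         (hmem f (List.mem_cons_of_mem e hf)).2⟩
      obtain ⟨h1, h2, h3, h4⟩ := ih (insert e T) hsortL' hndL' hmem' hT'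
      rw [hstep]
      set R := greedy (insert e T) L' with hR
      have hTR : T ⊆ R := (Finset.subset_insert e T).trans h1
      have heR : e ∈ R := h1 (Finset.mem_insert_self e T)
      have hsideT : ∀ x ∈ R, (x ∈ T ∨ β x < β e) → x ∈ T := by
        intro x hx hcond
        rcases h2 x hx with hx' | hx'
        · rcases Finset.mem_insert.1 hx' with h | h
          · rcases hcond with h' | h'
            · exact h'
            · exact absurd (h ▸ h') (lt_irrefl (β e))
          · exact h
        · rcases hcond with h' | h'
          · exact h'
          · exact absurd h' (not_lt.2 (hlt x hx').le)
      refine ⟨hTR, ?_, h3, ?_⟩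
      · intro x hx
        rcases h2 x hx with hx' | hx'
        · rcases Finset.mem_insert.1 hx' with h | h
          · exact Or.inr (h ▸ (List.mem_cons_self : e ∈ e :: L'))
          · exact Or.inl h
        · exact Or.inr (List.mem_cons_of_mem e hx')
      · intro f hf
        rcases List.mem_cons.1 hf with rfl | hf'
        · refine iff_of_true heR ?_
          intro g1 hg1 g2 hg2 c1 c2
          exact hacc.1 g1 (hsideT g1 hg1 c1) g2 (hsideT g2 hg2 c2)
        · have hcond : ∀ x, (x ∈ insert e T ∨ β x < β f) ↔ (x ∈ T ∨ β x < β f) := by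
            intro x
            constructor
            · rintro (hx | hx)
              · rcases Finset.mem_insert.1 hx with h | h
                · exact Or.inr (h ▸ hlt f hf')
                · exact Or.inl h
              · exact Or.inr hx
            · rintro (hx | hx)
              · exact Or.inl (Finset.mem_insert_of_mem hx)
              · exact Or.inr hx
          simpa only [hcond] using h4 f hf'
    · have hstep : greedy T (e :: L') = greedy T L' := by
        rw [greedy, if_neg hacc]
      have hmem' : ∀ f ∈ L', f ∉ T ∧ ¬ f.IsDiag := fun f hf =>
        hmem f (List.mem_cons_of_mem e hf)
      obtain ⟨h1, h2, h3, h4⟩ := ih T hsortL' hndL' hmem' hT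
      rw [hstep]
      set R := greedy T L' with hR
      have hnacc : ¬ AddOK T e := fun h => hacc ⟨h, heD⟩
      refine ⟨h1, fun x hx => (h2 x hx).imp_right (List.mem_cons_of_mem e), h3, ?_⟩
      intro f hf
      rcases List.mem_cons.1 hf with rfl | hf'
      · refine iff_of_false ?_ ?_
        · intro hfR
          rcases h2 f hfR with h | h
          · exact heT h
          · exact heL' h
        · intro hrhs
          refine hnacc (fun g1 hg1 g2 hg2 => ?_)
          exact hrhs g1 (h1 hg1) g2 (h1 hg2) (Or.inl hg1) (Or.inl hg2)
      · exact h4 f hf'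

lemma sortByBirth_pairwise {n : ℕ} (β : Edge n → ℝ) (s : Finset (Edge n)) :
    (sortByBirth β s).Pairwise (fun a b => β a ≤ β b) := by
  have h := List.pairwise_mergeSort (le := fun a b : Edge n => decide (β a ≤ β b))
    (fun a b c h1 h2 => by
      simp only [decide_eq_true_eq] at h1 h2 ⊢
      exact le_trans h1 h2)
    (fun a b => by
      simp only [Bool.or_eq_true, decide_eq_true_eq]
      exact le_total (β a) (β b))
    s.toList
  exact h.imp (fun h' => of_decide_eq_true h')

lemma sortByBirth_nodup {n : ℕ} (β : Edge n → ℝ) (s : Finset (Edge n)) :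
    (sortByBirth β s).Nodup :=
  ((List.mergeSort_perm s.toList _).nodup_iff).2 s.nodup_toList

lemma mem_sortByBirth {n : ℕ} (β : Edge n → ℝ) (s : Finset (Edge n)) (f : Edge n) :
    f ∈ sortByBirth β s ↔ f ∈ s :=
  ((List.mergeSort_perm s.toList _).mem_iff).trans (Finset.mem_toList)

lemma mem_Bnext_iff {n : ℕ} {ε : ℝ} {Bprev : Finset (Edge n)} {β : Edge n → ℝ} {f : Edge n} :
    f ∈ Bnext n ε Bprev β ↔ f ∈ allEdges n \ Bprev ∧ β f < del n ε * (n : ℝ) ^ (-(1:ℝ)/2) := by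
  rw [Bnext, Finset.mem_filter]

lemma TFnext_spec {n : ℕ} {ε : ℝ} {TFi Bprev : Finset (Edge n)} {β : Edge n → ℝ}
    (hInst : Instance n TFi Bprev) (hβ : Function.Injective β) :
    TFi ⊆ TFnext n ε TFi Bprev β ∧
    (∀ e ∈ TFnext n ε TFi Bprev β, e ∈ TFi ∨ e ∈ Bnext n ε Bprev β) ∧
    TriFree (TFnext n ε TFi Bprev β) ∧
    ∀ f ∈ Bnext n ε Bprev β, (f ∈ TFnext n ε TFi Bprev β ↔
      ∀ g1 ∈ TFnext n ε TFi Bprev β, ∀ g2 ∈ TFnext n ε TFi Bprev β,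
      (g1 ∈ TFi ∨ β g1 < β f) → (g2 ∈ TFi ∨ β g2 < β f) → ¬ IsTri f g1 g2) := by
  have hmem : ∀ e ∈ sortByBirth β (Bnext n ε Bprev β), e ∉ TFi ∧ ¬ e.IsDiag := by
    intro e he
    rw [mem_sortByBirth] at he
    obtain ⟨he1, _⟩ := mem_Bnext_iff.1 he
    obtain ⟨heA, heB⟩ := Finset.mem_sdiff.1 he1
    exact ⟨fun h => heB (hInst.1 h), (Finset.mem_filter.1 heA).2⟩
  obtain ⟨h1, h2, h3, h4⟩ := greedy_spec β hβ (sortByBirth β (Bnext n ε Bprev β)) TFi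
    (sortByBirth_pairwise β _) (sortByBirth_nodup β _) hmem hInst.2.2
  refine ⟨h1, ?_, h3, ?_⟩
  · intro e he
    exact (h2 e he).imp_right (mem_sortByBirth β _ e).1
  · intro f hf
    exact h4 f ((mem_sortByBirth β _ f).2 hf)

/-- `f` would be blocked (rejected) at its turn. -/
def Blocked (n : ℕ) (ε : ℝ) (TFi Bprev : Finset (Edge n)) (β : Edge n → ℝ) (f : Edge n) : Prop :=
  ∃ g1 ∈ TFnext n ε TFi Bprev β, ∃ g2 ∈ TFnext n ε TFi Bprev β,
    (g1 ∈ TFi ∨ β g1 < β f) ∧ (g2 ∈ TFi ∨ β g2 < β f) ∧ IsTri f g1 g2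

/-- The true status of edge `f` at the end of step `i+1`. -/
def Dpred (n : ℕ) (ε : ℝ) (TFi Bprev : Finset (Edge n)) (β : Edge n → ℝ) (f : Edge n) : Prop :=
  if β f < del n ε * (n : ℝ) ^ (-(1:ℝ)/2) then f ∈ TFnext n ε TFi Bprev β
  else TriFree (insert f (TFnext n ε TFi Bprev β))

lemma Dpred_iff_not_blocked {n : ℕ} {ε : ℝ} {TFi Bprev : Finset (Edge n)} {β : Edge n → ℝ}
    {f : Edge n} (hInst : Instance n TFi Bprev) (hβ : Function.Injective β)
    (hf : f ∈ allEdges n \ Bprev) :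
    Dpred n ε TFi Bprev β f ↔ ¬ Blocked n ε TFi Bprev β f := by
  obtain ⟨h1, h2, h3, h4⟩ := TFnext_spec (ε := ε) (β := β) hInst hβ
  by_cases h : β f < del n ε * (n : ℝ) ^ (-(1:ℝ)/2)
  · rw [Dpred, if_pos h, h4 f (mem_Bnext_iff.2 ⟨hf, h⟩)]
    simp only [Blocked, not_exists, not_and]
  · rw [Dpred, if_neg h, triFree_insert_iff h3]
    simp only [Blocked, not_exists, not_and]
    constructor
    · intro hfa g1 hg1 g2 hg2 _ _
      exact hfa g1 hg1 g2 hg2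
    · intro hfa g1 hg1 g2 hg2
      have hc : ∀ x ∈ TFnext n ε TFi Bprev β, x ∈ TFi ∨ β x < β f := by
        intro x hx
        refine (h2 x hx).imp_right (fun hx' => ?_)
        exact lt_of_lt_of_le (mem_Bnext_iff.1 hx').2 (not_lt.1 h)
      exact hfa g1 hg1 g2 hg2 (hc g1 hg1) (hc g2 hg2)

lemma two_le_of_mem_allEdges {n : ℕ} {g : Edge n} (hg : g ∈ allEdges n) : 2 ≤ n := by
  have hd : ¬ g.IsDiag := (Finset.mem_filter.1 hg).2
  induction g using Sym2.ind with
  | _ a b =>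
    rw [Sym2.mk_isDiag_iff] at hd
    have h1 : 1 < Fintype.card (Fin n) := Fintype.one_lt_card_iff.2 ⟨a, b, hd⟩
    exact (by simpa using h1 : 1 < n)

lemma Bnext_subset_BstarOf {n : ℕ} {ε : ℝ} {Bprev : Finset (Edge n)} {β : Edge n → ℝ}
    (hε0 : 0 < ε) (hn2 : 2 ≤ n) : Bnext n ε Bprev β ⊆ BstarOf n ε Bprev β := by
  have hn1 : (1 : ℝ) ≤ (n : ℝ) := by exact_mod_cast hn2.trans' (by norm_num)
  have hfloor : 1 ≤ ⌊(n : ℝ) ^ ε⌋₊ := by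
    refine Nat.le_floor ?_
    push_cast
    exact Real.one_le_rpow hn1 hε0.le
  have hdel : del n ε ≤ 1 := by
    rw [del]
    rw [div_le_one (by exact_mod_cast hfloor.trans_lt' (by norm_num) : (0:ℝ) < _)]
    exact_mod_cast hfloor
  have hMc : (1 : ℝ) ≤ Mc n ε := Real.one_le_rpow hn1 (by positivity)
  intro f hf
  rw [Bnext, Finset.mem_filter] at hf
  rw [BstarOf, Finset.mem_filter]
  refine ⟨hf.1, lt_of_lt_of_le hf.2 ?_⟩
  exact mul_le_mul_of_nonneg_right (hdel.trans hMc) (Real.rpow_nonneg (by positivity) _)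

lemma childSets_cases {n : ℕ} {TFi Bprev Bsel : Finset (Edge n)} {f : Edge n}
    {prev : Option (Edge n)} {G : Finset (Edge n)}
    (h : G ∈ childSets TFi Bprev Bsel f prev) :
    (∃ e, G = {e} ∧ e ∈ LamS1 TFi Bprev Bsel f) ∨ G ∈ LamS2 TFi Bprev Bsel f := by
  cases prev with
  | none =>
    rcases Finset.mem_union.1 h with h' | h'
    · obtain ⟨e, he, rfl⟩ := Finset.mem_image.1 h'
      exact Or.inl ⟨e, rfl, he⟩
    · exact Or.inr h'
  | some p =>
    rcases Finset.mem_union.1 h with h' | h'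
    · exact Or.inr (Finset.mem_filter.1 h').1
    · obtain ⟨e, he, rfl⟩ := Finset.mem_image.1 h'
      exact Or.inl ⟨e, rfl, (Finset.mem_filter.1 he).1⟩

lemma child_ctx {n : ℕ} {TFi Bprev Bsel : Finset (Edge n)} {f : Edge n}
    {prev : Option (Edge n)} {G : Finset (Edge n)}
    (h : G ∈ childSets TFi Bprev Bsel f prev) :
    ∀ f' ∈ G, f' ∈ allEdges n \ Bprev ∧ TriFree (insert f' TFi) := by
  intro f' hf'
  rcases childSets_cases h with ⟨e, rfl, he⟩ | hG
  · rw [Finset.mem_singleton] at hf'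
    subst hf'
    have he1 := (Finset.mem_filter.1 he).1
    rw [Lam1, Finset.mem_filter] at he1
    exact ⟨he1.1, he1.2.2⟩
  · have hL2 := (Finset.mem_filter.1 hG).1
    rw [Lam2, Finset.mem_filter] at hL2
    exact ⟨(Finset.mem_powersetCard.1 hL2.1).1 hf', hL2.2.2 f' hf'⟩

lemma blocked_iff_child {n : ℕ} {ε : ℝ} {TFi Bprev : Finset (Edge n)} {β : Edge n → ℝ}
    {f : Edge n} {prev : Option (Edge n)}
    (hInst : Instance n TFi Bprev) (hβ : Function.Injective β)
    (hε0 : 0 < ε) (hn2 : 2 ≤ n)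
    (hf : f ∈ allEdges n \ Bprev) (hTf : TriFree (insert f TFi))
    (hprev : ∀ p, prev = some p → β f < β p ∧ p ∉ Bprev) :
    Blocked n ε TFi Bprev β f ↔
    ∃ G ∈ childSets TFi Bprev (BstarOf n ε Bprev β) f prev,
      (∀ f' ∈ G, β f' < min (β f) (del n ε * (n : ℝ) ^ (-(1:ℝ)/2))) ∧
      ∀ f' ∈ G, f' ∈ TFnext n ε TFi Bprev β := by
  obtain ⟨h1, h2, h3, h4⟩ := TFnext_spec (ε := ε) (β := β) hInst hβ
  set TFn := TFnext n ε TFi Bprev β with hTFn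
  constructor
  · rintro ⟨g1, hg1, g2, hg2, c1, c2, tri⟩
    -- facts about new edges
    have hnew : ∀ x, x ∈ TFn → x ∉ TFi → β x < β f →
        x ∈ allEdges n \ Bprev ∧ β x < del n ε * (n : ℝ) ^ (-(1:ℝ)/2) ∧
        x ∈ BstarOf n ε Bprev β ∧ TriFree (insert x TFi) := by
      intro x hx hxT hxf
      have hxB : x ∈ Bnext n ε Bprev β := (h2 x hx).resolve_left hxT
      obtain ⟨hx1, hx2⟩ := mem_Bnext_iff.1 hxB
      exact ⟨hx1, hx2, Bnext_subset_BstarOf hε0 hn2 hxB,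
        TriFree.mono (Finset.insert_subset hx h1) h3⟩
    -- the case of a Λ₁-type (singleton) child
    have Hsingle : ∀ a b : Edge n, a ∈ TFn → a ∉ TFi → β a < β f → b ∈ TFi →
        IsTri f a b →
        ∃ G ∈ childSets TFi Bprev (BstarOf n ε Bprev β) f prev,
          (∀ f' ∈ G, β f' < min (β f) (del n ε * (n : ℝ) ^ (-(1:ℝ)/2))) ∧
          ∀ f' ∈ G, f' ∈ TFn := by
      intro a b ha haT haf hb htri
      obtain ⟨ha1, ha2, ha3, ha4⟩ := hnew a ha haT haf
      have haL1 : a ∈ Lam1 TFi Bprev f :=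
        Finset.mem_filter.2 ⟨ha1, ⟨b, hb, htri⟩, ha4⟩
      have haS1 : a ∈ LamS1 TFi Bprev (BstarOf n ε Bprev β) f :=
        Finset.mem_filter.2 ⟨haL1, ha3⟩
      have hchild : ({a} : Finset (Edge n)) ∈
          childSets TFi Bprev (BstarOf n ε Bprev β) f prev := by
        cases prev with
        | none =>
          exact Finset.mem_union.2 (Or.inl (Finset.mem_image.2 ⟨a, haS1, rfl⟩))
        | some p =>
          obtain ⟨hfp, hpB⟩ := hprev p rfl
          refine Finset.mem_union.2 (Or.inr (Finset.mem_image.2 ⟨a, ?_, rfl⟩))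
          refine Finset.mem_filter.2 ⟨haS1, ?_, ?_⟩
          · rintro rfl
            exact absurd (haf.trans hfp) (lt_irrefl (β a))
          · intro htri'
            have : p = b := IsTri.third_unique htri'.swap12 htri
            exact hpB (this ▸ hInst.1 hb)
      refine ⟨{a}, hchild, ?_, ?_⟩
      · intro f' hf'
        rw [Finset.mem_singleton] at hf'
        subst hf'
        exact lt_min haf ha2
      · intro f' hf'
        rw [Finset.mem_singleton] at hf'
        subst hf'
        exact ha
    by_cases hg1T : g1 ∈ TFi
    · by_cases hg2T : g2 ∈ TFi
      · exact absurd tri (hTf f (Finset.mem_insert_self f TFi)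
          g1 (Finset.mem_insert_of_mem hg1T) g2 (Finset.mem_insert_of_mem hg2T))
      · have hg2f : β g2 < β f := c2.resolve_left hg2T
        exact Hsingle g2 g1 hg2 hg2T hg2f hg1T tri.swap23
    · have hg1f : β g1 < β f := c1.resolve_left hg1T
      by_cases hg2T : g2 ∈ TFi
      · exact Hsingle g1 g2 hg1 hg1T hg1f hg2T tri
      · -- Λ₂-type (pair) child
        have hg2f : β g2 < β f := c2.resolve_left hg2T
        have hne : g1 ≠ g2 := tri.ne23
        obtain ⟨ha1, ha2, ha3, ha4⟩ := hnew g1 hg1 hg1T hg1f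
        obtain ⟨hb1, hb2, hb3, hb4⟩ := hnew g2 hg2 hg2T hg2f
        set P : Finset (Edge n) := {g1, g2} with hP
        have hg1P : g1 ∈ P := Finset.mem_insert_self g1 {g2}
        have hg2P : g2 ∈ P := Finset.mem_insert_of_mem (Finset.mem_singleton_self g2)
        have hPmem : ∀ x ∈ P, x = g1 ∨ x = g2 := by
          intro x hx
          rcases Finset.mem_insert.1 hx with h | h
          · exact Or.inl h
          · exact Or.inr (Finset.mem_singleton.1 h)
        have hL2 : P ∈ Lam2 TFi Bprev f := by
          refine Finset.mem_filter.2 ⟨Finset.mem_powersetCard.2 ⟨?_, Finset.card_pair hne⟩,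
            ⟨g1, hg1P, g2, hg2P, hne, tri⟩, ?_⟩
          · rw [Finset.insert_subset_iff, Finset.singleton_subset_iff]
            exact ⟨ha1, hb1⟩
          · intro x hx
            rcases hPmem x hx with rfl | rfl
            · exact ha4
            · exact hb4
        have hS2 : P ∈ LamS2 TFi Bprev (BstarOf n ε Bprev β) f := by
          refine Finset.mem_filter.2 ⟨hL2, ?_⟩
          rw [hP, Finset.insert_subset_iff, Finset.singleton_subset_iff]
          exact ⟨ha3, hb3⟩
        have hchild : P ∈ childSets TFi Bprev (BstarOf n ε Bprev β) f prev := by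
          cases prev with
          | none => exact Finset.mem_union.2 (Or.inr hS2)
          | some p =>
            obtain ⟨hfp, hpB⟩ := hprev p rfl
            refine Finset.mem_union.2 (Or.inl (Finset.mem_filter.2 ⟨hS2, ?_⟩))
            intro hpP
            rcases hPmem p hpP with rfl | rfl
            · exact absurd (hg1f.trans hfp) (lt_irrefl (β p))
            · exact absurd (hg2f.trans hfp) (lt_irrefl (β p))
        refine ⟨P, hchild, ?_, ?_⟩
        · intro x hx
          rcases hPmem x hx with rfl | rfl
          · exact lt_min hg1f ha2
          · exact lt_min hg2f hb2
        · intro x hx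
          rcases hPmem x hx with rfl | rfl
          · exact hg1
          · exact hg2
  · rintro ⟨G, hG, hearly, hall⟩
    rcases childSets_cases hG with ⟨e, rfl, heS1⟩ | hG2
    · have heL1 := (Finset.mem_filter.1 heS1).1
      obtain ⟨g2, hg2, tri⟩ := (Finset.mem_filter.1 heL1).2.1
      have heG : e ∈ ({e} : Finset (Edge n)) := Finset.mem_singleton_self e
      exact ⟨e, hall e heG, g2, h1 hg2,
        Or.inr (lt_min_iff.1 (hearly e heG)).1, Or.inl hg2, tri⟩
    · have hL2 := (Finset.mem_filter.1 hG2).1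
      obtain ⟨g1, hg1G, g2, hg2G, hne, tri⟩ := (Finset.mem_filter.1 hL2).2.1
      exact ⟨g1, hall g1 hg1G, g2, hall g2 hg2G,
        Or.inr (lt_min_iff.1 (hearly g1 hg1G)).1,
        Or.inr (lt_min_iff.1 (hearly g2 hg2G)).1, tri⟩

lemma main_ind {n : ℕ} {ε : ℝ} {TFi Bprev : Finset (Edge n)} {β : Edge n → ℝ}
    (hInst : Instance n TFi Bprev) (hβ : Function.Injective β)
    (hε0 : 0 < ε) (hn2 : 2 ≤ n) :
    ∀ l (f : Edge n), f ∈ allEdges n \ Bprev → TriFree (insert f TFi) →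
    ∀ prev : Option (Edge n), (∀ p, prev = some p → β f < β p ∧ p ∉ Bprev) →
    (Odd l → surv n ε TFi Bprev (BstarOf n ε Bprev β) β l f prev (β f) →
      Dpred n ε TFi Bprev β f) ∧
    (Even l → Dpred n ε TFi Bprev β f →
      surv n ε TFi Bprev (BstarOf n ε Bprev β) β l f prev (β f)) := by
  intro l
  induction l with
  | zero =>
    intro f hf hTf prev hprev
    exact ⟨fun h => absurd h (by simp [Nat.odd_iff]), fun _ _ => trivial⟩
  | succ l ih =>
    intro f hf hTf prev hprev
    have hprev' : ∀ f' : Edge n, β f' < β f →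
        ∀ p, (some f : Option (Edge n)) = some p → β f' < β p ∧ p ∉ Bprev := by
      intro f' hlt p hp
      obtain rfl : f = p := Option.some.inj hp
      exact ⟨hlt, (Finset.mem_sdiff.1 hf).2⟩
    constructor
    · intro hodd hs
      have hev : Even l := Nat.even_iff.2 (by have := Nat.odd_iff.1 hodd; omega)
      rw [Dpred_iff_not_blocked hInst hβ hf,
        blocked_iff_child hInst hβ hε0 hn2 hf hTf hprev]
      rintro ⟨G, hG, hearly, hall⟩
      rw [surv] at hs
      obtain ⟨f', hf'G, hns⟩ := hs G hG hearly
      obtain ⟨hf'mem, hf'T⟩ := child_ctx hG f' hf'G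
      have hmin := lt_min_iff.1 (hearly f' hf'G)
      have hD' := (ih f' hf'mem hf'T (some f) (hprev' f' hmin.1)).2 hev
      have hnd : ¬ Dpred n ε TFi Bprev β f' := fun h => hns (hD' h)
      rw [Dpred, if_pos hmin.2] at hnd
      exact hnd (hall f' hf'G)
    · intro heven hD
      have hodd : Odd l := Nat.odd_iff.2 (by have := Nat.even_iff.1 heven; omega)
      have hnb : ¬ Blocked n ε TFi Bprev β f :=
        (Dpred_iff_not_blocked hInst hβ hf).1 hD
      rw [surv]
      intro G hG hearly
      have hnall : ¬ ∀ f' ∈ G, f' ∈ TFnext n ε TFi Bprev β := fun hall =>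
        hnb ((blocked_iff_child hInst hβ hε0 hn2 hf hTf hprev).2 ⟨G, hG, hearly, hall⟩)
      push_neg at hnall
      obtain ⟨f', hf'G, hnt⟩ := hnall
      refine ⟨f', hf'G, fun hs => ?_⟩
      obtain ⟨hf'mem, hf'T⟩ := child_ctx hG f' hf'G
      have hmin := lt_min_iff.1 (hearly f' hf'G)
      have hDf' := (ih f' hf'mem hf'T (some f) (hprev' f' hmin.1)).1 hodd hs
      rw [Dpred, if_pos hmin.2] at hDf'
      exact hnt hDf'

/-- Fix `0 ≤ i < I`, an edge `g ∉ B_{≤i}` and an odd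
`l ≥ 1`. (a) On the event `{g ∈ B_{i+1}, TF_i ∪ {g}` triangle-free`}`:
`A_{g,l} ⟹ g ∈ TF_{i+1} ⟹ A_{g,l+1}`. (b) On the event
`{g ∉ B_{≤i+1}, TF_i ∪ {g}` triangle-free`}`:
`A_{g,l} ⟹ TF_{i+1} ∪ {g}` triangle-free `⟹ A_{g,l+1}`. -/
theorem survival_vs_process
    (ε : ℝ) (hε0 : 0 < ε) (hε1 : ε < 1 / 10 ^ 10)
    (n : ℕ) (i : ℕ) (hi : i < Inat n ε)
    (TFi Bprev : Finset (Edge n))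
    (hInst : Instance n TFi Bprev) (hWB : WellBehaved n ε i TFi Bprev)
    (β : Edge n → ℝ) (hβ : Function.Injective β)
    (g : Edge n) (hg : g ∈ allEdges n \ Bprev)
    (l : ℕ) (hl1 : 1 ≤ l) (hlodd : Odd l)
    (hTg : TriFree (insert g TFi)) :
    (g ∈ Bnext n ε Bprev β →
      (Aev n ε TFi Bprev (BstarOf n ε Bprev β) β l g →
        g ∈ TFnext n ε TFi Bprev β) ∧
      (g ∈ TFnext n ε TFi Bprev β →
        Aev n ε TFi Bprev (BstarOf n ε Bprev β) β (l + 1) g)) ∧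
    (g ∉ Bnext n ε Bprev β →
      (Aev n ε TFi Bprev (BstarOf n ε Bprev β) β l g →
        TriFree (insert g (TFnext n ε TFi Bprev β))) ∧
      (TriFree (insert g (TFnext n ε TFi Bprev β)) →
        Aev n ε TFi Bprev (BstarOf n ε Bprev β) β (l + 1) g)) := by
  have hn2 : 2 ≤ n := two_le_of_mem_allEdges (Finset.mem_sdiff.1 hg).1
  have main := main_ind (ε := ε) hInst hβ hε0 hn2
  have hprev0 : ∀ p : Edge n, (none : Option (Edge n)) = some p →
      β g < β p ∧ p ∉ Bprev := by
    intro p hp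
    simp at hp
  have heven : Even (l + 1) := hlodd.add_one
  constructor
  · intro hgB
    have hβg : β g < del n ε * (n : ℝ) ^ (-(1:ℝ)/2) := (mem_Bnext_iff.1 hgB).2
    have hDg : Dpred n ε TFi Bprev β g ↔ g ∈ TFnext n ε TFi Bprev β := by
      rw [Dpred, if_pos hβg]
    refine ⟨fun hA => ?_, fun hT => ?_⟩
    · exact hDg.1 ((main l g hg hTg none hprev0).1 hlodd hA)
    · exact (main (l + 1) g hg hTg none hprev0).2 heven (hDg.2 hT)
  · intro hgnB
    have hβg : ¬ (β g < del n ε * (n : ℝ) ^ (-(1:ℝ)/2)) := fun h =>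
      hgnB (mem_Bnext_iff.2 ⟨hg, h⟩)
    have hDg : Dpred n ε TFi Bprev β g ↔
        TriFree (insert g (TFnext n ε TFi Bprev β)) := by
      rw [Dpred, if_neg hβg]
    refine ⟨fun hA => ?_, fun hT => ?_⟩
    · exact hDg.1 ((main l g hg hTg none hprev0).1 hlodd hA)
    · exact (main (l + 1) g hg hTg none hprev0).2 heven (hDg.2 hT)

end
end TF
end

section
/- Fix s ≥ 0 and set Φ₀ := Φ(s) and φ₀ := φ(s) = exp(−Φ₀²). Let P : [0,∞) → ℝ be the solution of the initial value problem P(0) = 0, P'(x) = exp(−P(x)²·φ₀² − 2·P(x)·Φ₀·φ₀). Then for every x ≥ 0: (√π/2)·(erfi(Φ₀ + φ₀·P(x)) − erfi(Φ₀)) = x; consequently P(x) = (Φ(s+x) − Φ(s))/φ(s) and P'(x) = φ(s+x)/φ(s). -/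
open MeasureTheory Finset Filter

namespace TF
noncomputable section
open scoped Classical

private def Fg : ℝ → ℝ := fun y : ℝ => (Real.sqrt Real.pi / 2) * erfi y

private lemma Fg_eq (y : ℝ) : Fg y = ∫ t in (0:ℝ)..y, Real.exp (t ^ 2) := by
  have h : Real.sqrt Real.pi ≠ 0 := (Real.sqrt_pos.mpr Real.pi_pos).ne'
  simp only [Fg, erfi]
  field_simp

private lemma Fg_hasDerivAt (y : ℝ) : HasDerivAt Fg (Real.exp (y ^ 2)) y := by
  have hc : Continuous fun t : ℝ => Real.exp (t ^ 2) :=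
    Real.continuous_exp.comp (continuous_pow 2)
  have : Fg = fun t : ℝ => ∫ u in (0:ℝ)..t, Real.exp (u ^ 2) := funext Fg_eq
  rw [this]
  exact intervalIntegral.integral_hasDerivAt_right (hc.intervalIntegrable _ _)
    (hc.stronglyMeasurableAtFilter _ _) hc.continuousAt

private lemma Fg_strictMono : StrictMono Fg :=
  strictMono_of_deriv_pos fun y => by
    rw [(Fg_hasDerivAt y).deriv]; positivity

private lemma Fg_surjective : Function.Surjective Fg := by
  have hc : Continuous Fg := by
    rw [continuous_iff_continuousAt]
    exact fun y => (Fg_hasDerivAt y).continuousAt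
  have hint : ∀ a b : ℝ, IntervalIntegrable (fun t : ℝ => Real.exp (t ^ 2)) volume a b :=
    fun a b => (Real.continuous_exp.comp (continuous_pow 2)).intervalIntegrable a b
  refine hc.surjective ?_ ?_
  · refine tendsto_atTop_mono' atTop ?_ tendsto_id
    filter_upwards [eventually_ge_atTop (0:ℝ)] with y hy
    have h1 : (∫ t in (0:ℝ)..y, (1:ℝ)) ≤ ∫ t in (0:ℝ)..y, Real.exp (t ^ 2) :=
      intervalIntegral.integral_mono_on hy (intervalIntegrable_const) (hint 0 y)
        fun t _ => Real.one_le_exp (sq_nonneg t)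
    simpa [Fg_eq] using h1
  · refine tendsto_atBot_mono' atBot ?_ tendsto_id
    filter_upwards [eventually_le_atBot (0:ℝ)] with y hy
    have h1 : (∫ t in y..(0:ℝ), (1:ℝ)) ≤ ∫ t in y..(0:ℝ), Real.exp (t ^ 2) :=
      intervalIntegral.integral_mono_on hy (intervalIntegrable_const) (hint y 0)
        fun t _ => Real.one_le_exp (sq_nonneg t)
    have h2 : Fg y = -∫ t in y..(0:ℝ), Real.exp (t ^ 2) := by
      rw [Fg_eq, intervalIntegral.integral_symm y 0]
    have h3 : (∫ _t in y..(0:ℝ), (1:ℝ)) = -y := by simp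
    simp only [id_eq]
    rw [h2]
    linarith

private lemma Fg_Phi (t : ℝ) : Fg (Phi t) = t :=
  Function.rightInverse_invFun Fg_surjective t

/-- With `Φ₀ := Φ(s)` and `φ₀ := φ(s)`, the solution `P` of
`P(0) = 0`, `P'(x) = exp(-P(x)²φ₀² - 2P(x)Φ₀φ₀)` satisfies, for `x ≥ 0`,
`(√π/2)(erfi(Φ₀ + φ₀P(x)) - erfi(Φ₀)) = x`, hence
`P(x) = (Φ(s+x) - Φ(s))/φ(s)` and `P'(x) = φ(s+x)/φ(s)`. -/
theorem ode_solution
    (s : ℝ) (hs : 0 ≤ s) (P : ℝ → ℝ) (hP0 : P 0 = 0)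
    (hP' : ∀ x ∈ Set.Ici (0 : ℝ),
      HasDerivWithinAt P
        (Real.exp (-(P x) ^ 2 * phi s ^ 2 - 2 * P x * Phi s * phi s))
        (Set.Ici (0 : ℝ)) x) :
    ∀ x : ℝ, 0 ≤ x →
      (Real.sqrt Real.pi / 2) * (erfi (Phi s + phi s * P x) - erfi (Phi s)) = x ∧
      P x = (Phi (s + x) - Phi s) / phi s ∧
      Real.exp (-(P x) ^ 2 * phi s ^ 2 - 2 * P x * Phi s * phi s) =
        phi (s + x) / phi s := by
  have hphi_pos : 0 < phi s := Real.exp_pos _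
  -- derivative of H t := Fg (Phi s + phi s * P t) - t is zero on Ici 0
  have hH : ∀ t ∈ Set.Ici (0:ℝ),
      HasDerivWithinAt (fun t => Fg (Phi s + phi s * P t) - t) 0 (Set.Ici (0:ℝ)) t := by
    intro t ht
    have hinner : HasDerivWithinAt (fun t => Phi s + phi s * P t)
        (phi s * Real.exp (-(P t) ^ 2 * phi s ^ 2 - 2 * P t * Phi s * phi s))
        (Set.Ici (0:ℝ)) t := ((hP' t ht).const_mul (phi s)).const_add (Phi s)
    have hcomp := (Fg_hasDerivAt (Phi s + phi s * P t)).comp_hasDerivWithinAt t hinner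
    have hsub := hcomp.sub (hasDerivWithinAt_id t (Set.Ici (0:ℝ)))
    have hval : Real.exp ((Phi s + phi s * P t) ^ 2) *
        (phi s * Real.exp (-(P t) ^ 2 * phi s ^ 2 - 2 * P t * Phi s * phi s)) - 1 = 0 := by
      simp only [phi, ← Real.exp_add]
      rw [sub_eq_zero, ← Real.exp_zero]
      congr 1
      ring
    rwa [hval] at hsub
  intro x hx
  have hconst := constant_of_has_deriv_right_zero
    (f := fun t => Fg (Phi s + phi s * P t) - t) (a := 0) (b := x)
    (fun t ht => ((hH t ht.1).continuousWithinAt).mono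
      (fun u hu => hu.1 : Set.Icc (0:ℝ) x ⊆ Set.Ici (0:ℝ)))
    (fun t ht => (hH t ht.1).mono (Set.Ici_subset_Ici.mpr ht.1))
    x ⟨hx, le_refl x⟩
  have hkey : Fg (Phi s + phi s * P x) - x = Fg (Phi s) := by
    simpa [hP0] using hconst
  have g1 : (Real.sqrt Real.pi / 2) * (erfi (Phi s + phi s * P x) - erfi (Phi s)) = x := by
    have : Fg (Phi s + phi s * P x) - Fg (Phi s) = x := by linarith
    simpa [Fg, mul_sub] using this
  have hu : Phi s + phi s * P x = Phi (s + x) := by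
    apply Fg_strictMono.injective
    rw [Fg_Phi]
    have := Fg_Phi s
    linarith
  refine ⟨g1, ?_, ?_⟩
  · rw [← hu]
    field_simp
    ring
  · have hE : -(P x) ^ 2 * phi s ^ 2 - 2 * P x * Phi s * phi s =
        -(Phi (s + x)) ^ 2 - -(Phi s) ^ 2 := by
      rw [← hu]; ring
    rw [hE, phi, phi, Real.exp_sub]

end
end TF
end

section
/- Fix L ∈ {40,41}. For every sufficiently large n, every 0 ≤ i < I and every x ∈ [0,δ]: |p_L(x) − p(x)| ≤ n^{-36ε}; moreover p(x) → 1 uniformly in x ∈ [0,δ] and i as n → ∞, so that p_L(x) = p(x)·(1 ± h(n)·Γ(i)·γ(i)) for some function h(n) → 0. -/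
open MeasureTheory Finset Filter

namespace TF
noncomputable section
open scoped Classical


private lemma exp_lip {a b : ℝ} (ha : a ≤ 0) (hb : b ≤ 0) :
    |Real.exp a - Real.exp b| ≤ |a - b| := by
  wlog h : b ≤ a generalizing a b
  · rw [abs_sub_comm, abs_sub_comm a b]; exact this hb ha (le_of_not_ge h)
  have h1 : (b - a) + 1 ≤ Real.exp (b - a) := Real.add_one_le_exp _
  have h2 : Real.exp (b - a) * Real.exp a = Real.exp b := by
    rw [← Real.exp_add]; ring_nf
  have h3 : Real.exp a ≤ 1 := Real.exp_le_one_iff.2 ha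
  have h4 := Real.exp_pos a
  rw [abs_of_nonneg (sub_nonneg.2 (Real.exp_le_exp.2 h)),
    abs_of_nonneg (sub_nonneg.2 h)]
  nlinarith [mul_le_mul_of_nonneg_right h1 h4.le]

private lemma contExp : Continuous fun t : ℝ => Real.exp (t ^ 2) :=
  Real.continuous_exp.comp (continuous_pow 2)

private lemma intExp (a b : ℝ) :
    IntervalIntegrable (fun t : ℝ => Real.exp (t ^ 2)) MeasureTheory.volume a b :=
  contExp.intervalIntegrable a b

private lemma gint_eq (y : ℝ) :
    Real.sqrt Real.pi / 2 * erfi y = ∫ t in (0:ℝ)..y, Real.exp (t ^ 2) := by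
  have hπ : Real.sqrt Real.pi ≠ 0 := ne_of_gt (Real.sqrt_pos.2 Real.pi_pos)
  unfold erfi
  field_simp

private lemma g_surj :
    Function.Surjective (fun y : ℝ => ∫ t in (0:ℝ)..y, Real.exp (t ^ 2)) := by
  have hcont : Continuous fun y : ℝ => ∫ t in (0:ℝ)..y, Real.exp (t ^ 2) :=
    intervalIntegral.continuous_primitive intExp 0
  apply hcont.surjective
  · apply tendsto_atTop_mono' atTop _ tendsto_id
    filter_upwards [eventually_ge_atTop (0:ℝ)] with y hy
    have h0 : (y:ℝ) = ∫ t in (0:ℝ)..y, (1:ℝ) := by simp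
    calc id y = ∫ t in (0:ℝ)..y, (1:ℝ) := by simpa using h0
      _ ≤ ∫ t in (0:ℝ)..y, Real.exp (t ^ 2) :=
        intervalIntegral.integral_mono_on hy intervalIntegrable_const (intExp 0 y)
          (fun t _ => Real.one_le_exp (sq_nonneg t))
  · apply tendsto_atBot_mono' atBot _ tendsto_id
    filter_upwards [eventually_le_atBot (0:ℝ)] with y hy
    have h1 : -y ≤ ∫ t in y..(0:ℝ), Real.exp (t ^ 2) := by
      have h0 : (-y:ℝ) = ∫ t in y..(0:ℝ), (1:ℝ) := by simp
      calc (-y:ℝ) = ∫ t in y..(0:ℝ), (1:ℝ) := h0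
        _ ≤ _ := intervalIntegral.integral_mono_on hy intervalIntegrable_const (intExp y 0)
          (fun t _ => Real.one_le_exp (sq_nonneg t))
    have h2 : (∫ t in (0:ℝ)..y, Real.exp (t ^ 2)) = -∫ t in y..(0:ℝ), Real.exp (t ^ 2) :=
      intervalIntegral.integral_symm y 0
    simp only [id_eq]
    linarith

private lemma g_strictMono :
    StrictMono (fun y : ℝ => ∫ t in (0:ℝ)..y, Real.exp (t ^ 2)) := by
  intro a b hab
  have h1 : (0:ℝ) < ∫ t in a..b, Real.exp (t ^ 2) :=
    intervalIntegral.intervalIntegral_pos_of_pos (intExp a b) (fun t => Real.exp_pos _) hab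
  have h2 := intervalIntegral.integral_add_adjacent_intervals (intExp 0 a) (intExp a b)
  simp only []
  linarith

private lemma g_Phi (x : ℝ) : (∫ t in (0:ℝ)..(Phi x), Real.exp (t ^ 2)) = x := by
  have h : (fun y : ℝ => Real.sqrt Real.pi / 2 * erfi y)
      = fun y : ℝ => ∫ t in (0:ℝ)..y, Real.exp (t ^ 2) := funext gint_eq
  rw [Phi, h]
  exact Function.invFun_eq (g_surj x)

private lemma Phi_nonneg {x : ℝ} (hx : 0 ≤ x) : 0 ≤ Phi x := by
  by_contra h
  push_neg at h
  have h2 : (∫ t in (0:ℝ)..(Phi x), Real.exp (t ^ 2))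
      < ∫ t in (0:ℝ)..(0:ℝ), Real.exp (t ^ 2) := g_strictMono h
  rw [g_Phi, intervalIntegral.integral_same] at h2
  linarith

private lemma mul_exp_neg_sq_le (t : ℝ) : t * Real.exp (-t ^ 2) ≤ 1 / 2 := by
  have h1 : 2 * t ≤ Real.exp (t ^ 2) := by
    rcases le_or_gt t 0 with h | h
    · linarith [Real.exp_pos (t ^ 2)]
    · nlinarith [Real.add_one_le_exp (t ^ 2), sq_nonneg (t - 1)]
  have h2 := Real.exp_pos (-t ^ 2)
  have h3 : Real.exp (t ^ 2) * Real.exp (-t ^ 2) = 1 := by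
    rw [← Real.exp_add]; simp
  nlinarith [mul_le_mul_of_nonneg_right h1 h2.le]

private lemma phi_eq (x : ℝ) : phi x = Real.exp (-(Phi x) ^ 2) := rfl

private lemma phi_pos (x : ℝ) : 0 < phi x := Real.exp_pos _

private lemma phi_le_one (x : ℝ) : phi x ≤ 1 := by
  rw [phi_eq, Real.exp_le_one_iff]
  nlinarith [sq_nonneg (Phi x)]

private lemma Phi_mul_phi_le (x : ℝ) : Phi x * phi x ≤ 1 / 2 :=
  mul_exp_neg_sq_le (Phi x)

private lemma plim_cont (c1 c2 : ℝ) : ∀ l, Continuous (plim c1 c2 l)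
  | 0 => continuous_const
  | (l + 1) => by
      have ih := plim_cont c1 c2 l
      have hint : Continuous fun x : ℝ => ∫ y in (0:ℝ)..x, plim c1 c2 l y :=
        intervalIntegral.continuous_primitive (fun a b => ih.intervalIntegrable a b) 0
      show Continuous fun x : ℝ =>
        Real.exp (-(∫ y in (0:ℝ)..x, plim c1 c2 l y) ^ 2 * c1 ^ 2 -
          2 * (∫ y in (0:ℝ)..x, plim c1 c2 l y) * c2 * c1)
      exact Real.continuous_exp.comp
        ((((hint.pow 2).neg.mul continuous_const).sub
          (((continuous_const.mul hint).mul continuous_const).mul continuous_const)))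

private lemma plim_pos (c1 c2 : ℝ) : ∀ l x, 0 < plim c1 c2 l x
  | 0, x => one_pos
  | (l + 1), x => Real.exp_pos _

private lemma plim_le_one (c1 c2 : ℝ) (hc1 : 0 ≤ c1) (hc2 : 0 ≤ c2) :
    ∀ l, ∀ x : ℝ, 0 ≤ x → plim c1 c2 l x ≤ 1
  | 0, x, _ => le_refl 1
  | (l + 1), x, hx => by
      have hP : 0 ≤ ∫ y in (0:ℝ)..x, plim c1 c2 l y :=
        intervalIntegral.integral_nonneg hx (fun u _ => (plim_pos c1 c2 l u).le)
      show Real.exp (-(∫ y in (0:ℝ)..x, plim c1 c2 l y) ^ 2 * c1 ^ 2 -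
          2 * (∫ y in (0:ℝ)..x, plim c1 c2 l y) * c2 * c1) ≤ 1
      rw [Real.exp_le_one_iff]
      nlinarith [sq_nonneg ((∫ y in (0:ℝ)..x, plim c1 c2 l y) * c1),
        mul_nonneg (mul_nonneg (mul_nonneg (by norm_num : (0:ℝ) ≤ 2) hP) hc2) hc1]

private lemma p_basic (c1 c2 d : ℝ) (hc1 : 0 ≤ c1) (hc2 : 0 ≤ c2)
    (p : ℝ → ℝ) (hp : ContinuousOn p (Set.Icc 0 d))
    (hfix : ∀ x ∈ Set.Icc (0:ℝ) d,
      p x = Real.exp (-(∫ y in (0:ℝ)..x, p y) ^ 2 * c1 ^ 2 -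
        2 * (∫ y in (0:ℝ)..x, p y) * c2 * c1)) :
    ∀ x ∈ Set.Icc (0:ℝ) d, 0 < p x ∧ p x ≤ 1 ∧
      0 ≤ (∫ y in (0:ℝ)..x, p y) ∧ (∫ y in (0:ℝ)..x, p y) ≤ x := by
  have hpos : ∀ x ∈ Set.Icc (0:ℝ) d, 0 < p x := fun x hx => by
    rw [hfix x hx]; exact Real.exp_pos _
  have hPnn : ∀ x ∈ Set.Icc (0:ℝ) d, 0 ≤ ∫ y in (0:ℝ)..x, p y := fun x hx =>
    intervalIntegral.integral_nonneg hx.1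
      (fun u hu => (hpos u ⟨hu.1, hu.2.trans hx.2⟩).le)
  have hple : ∀ x ∈ Set.Icc (0:ℝ) d, p x ≤ 1 := fun x hx => by
    rw [hfix x hx, Real.exp_le_one_iff]
    nlinarith [sq_nonneg ((∫ y in (0:ℝ)..x, p y) * c1),
      mul_nonneg (mul_nonneg (mul_nonneg (by norm_num : (0:ℝ) ≤ 2) (hPnn x hx)) hc2) hc1]
  have hPle : ∀ x ∈ Set.Icc (0:ℝ) d, (∫ y in (0:ℝ)..x, p y) ≤ x := fun x hx => by
    have hss : Set.uIcc (0:ℝ) x ⊆ Set.Icc 0 d := by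
      rw [Set.uIcc_of_le hx.1]
      exact Set.Icc_subset_Icc le_rfl hx.2
    have hint : IntervalIntegrable p MeasureTheory.volume 0 x :=
      (hp.mono hss).intervalIntegrable
    calc (∫ y in (0:ℝ)..x, p y) ≤ ∫ y in (0:ℝ)..x, (1:ℝ) :=
        intervalIntegral.integral_mono_on hx.1 hint intervalIntegrable_const
          (fun u hu => hple u ⟨hu.1, hu.2.trans hx.2⟩)
      _ = x := by simp
  exact fun x hx => ⟨hpos x hx, hple x hx, hPnn x hx, hPle x hx⟩

set_option maxHeartbeats 1000000 in
private lemma key (c1 c2 d : ℝ) (hc1 : 0 ≤ c1) (hc1' : c1 ≤ 1) (hc2 : 0 ≤ c2)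
    (hd0 : 0 ≤ d)
    (p : ℝ → ℝ) (hp : ContinuousOn p (Set.Icc 0 d))
    (hfix : ∀ x ∈ Set.Icc (0:ℝ) d,
      p x = Real.exp (-(∫ y in (0:ℝ)..x, p y) ^ 2 * c1 ^ 2 -
        2 * (∫ y in (0:ℝ)..x, p y) * c2 * c1)) :
    ∀ l : ℕ, ∀ x ∈ Set.Icc (0:ℝ) d,
      |plim c1 c2 l x - p x| ≤
        (2 * d ^ 2 * c1 ^ 2 + 2 * d * (c2 * c1)) ^ l * (d ^ 2 * c1 ^ 2 + 2 * d * (c2 * c1)) := by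
  have hpb := p_basic c1 c2 d hc1 hc2 p hp hfix
  intro l
  induction l with
  | zero =>
    intro x hx
    obtain ⟨hp0, hp1, hP0, hPx⟩ := hpb x hx
    have hE : -(∫ y in (0:ℝ)..x, p y) ^ 2 * c1 ^ 2 -
        2 * (∫ y in (0:ℝ)..x, p y) * c2 * c1 + 1 ≤ p x := by
      rw [hfix x hx]; exact Real.add_one_le_exp _
    have hxd : x ≤ d := hx.2
    have hPd : (∫ y in (0:ℝ)..x, p y) ≤ d := hPx.trans hxd
    have hsq0 : (∫ y in (0:ℝ)..x, p y) ^ 2 ≤ d ^ 2 := by nlinarith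
    have hsq : (∫ y in (0:ℝ)..x, p y) ^ 2 * c1 ^ 2 ≤ d ^ 2 * c1 ^ 2 :=
      mul_le_mul_of_nonneg_right hsq0 (sq_nonneg c1)
    have hlin : 2 * (∫ y in (0:ℝ)..x, p y) * c2 * c1 ≤ 2 * d * (c2 * c1) := by
      nlinarith [mul_nonneg (mul_nonneg hc2 hc1) (sub_nonneg.2 hPd)]
    have h1 : 1 - (d ^ 2 * c1 ^ 2 + 2 * d * (c2 * c1)) ≤ p x := by linarith
    show |1 - p x| ≤ _
    rw [pow_zero, one_mul, abs_of_nonneg (by linarith)]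
    linarith
  | succ l ih =>
    intro x hx
    obtain ⟨hp0, hp1, hP0, hPx⟩ := hpb x hx
    set Q := ∫ y in (0:ℝ)..x, plim c1 c2 l y with hQdef
    set P := ∫ y in (0:ℝ)..x, p y with hPdef
    have hxd : x ≤ d := hx.2
    have hx0 : (0:ℝ) ≤ x := hx.1
    have hQ0 : 0 ≤ Q := intervalIntegral.integral_nonneg hx0
      (fun u _ => (plim_pos c1 c2 l u).le)
    have hQx : Q ≤ x := by
      have h0 := intervalIntegral.integral_mono_on hx0
        ((plim_cont c1 c2 l).intervalIntegrable 0 x)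
        (intervalIntegrable_const :
          IntervalIntegrable (fun _ : ℝ => (1:ℝ)) MeasureTheory.volume 0 x)
        (fun u hu => plim_le_one c1 c2 hc1 hc2 l u hu.1)
      simpa using h0
    set K := 2 * d ^ 2 * c1 ^ 2 + 2 * d * (c2 * c1) with hKdef
    set D := d ^ 2 * c1 ^ 2 + 2 * d * (c2 * c1) with hDdef
    have hK0 : 0 ≤ K := by
      nlinarith [sq_nonneg (d * c1), mul_nonneg (mul_nonneg hd0 hc2) hc1]
    have hD0 : 0 ≤ D := by
      nlinarith [sq_nonneg (d * c1), mul_nonneg (mul_nonneg hd0 hc2) hc1]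
    have hKD0 : 0 ≤ K ^ l * D := mul_nonneg (pow_nonneg hK0 l) hD0
    have hss : Set.uIcc (0:ℝ) x ⊆ Set.Icc 0 d := by
      rw [Set.uIcc_of_le hx0]
      exact Set.Icc_subset_Icc le_rfl hxd
    have hint : IntervalIntegrable p MeasureTheory.volume 0 x :=
      (hp.mono hss).intervalIntegrable
    have hsub : Q - P = ∫ y in (0:ℝ)..x, (plim c1 c2 l y - p y) :=
      (intervalIntegral.integral_sub ((plim_cont c1 c2 l).intervalIntegrable 0 x) hint).symm
    have hQP : |Q - P| ≤ d * (K ^ l * D) := by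
      rw [hsub]
      have hbd : ∀ y ∈ Set.uIoc (0:ℝ) x, ‖plim c1 c2 l y - p y‖ ≤ K ^ l * D := by
        intro y hy
        rw [Set.uIoc_of_le hx0] at hy
        exact (ih y ⟨hy.1.le, hy.2.trans hxd⟩)
      have := intervalIntegral.norm_integral_le_of_norm_le_const hbd
      rw [Real.norm_eq_abs] at this
      calc |∫ y in (0:ℝ)..x, (plim c1 c2 l y - p y)| ≤ K ^ l * D * |x - 0| := this
        _ = K ^ l * D * x := by rw [sub_zero, abs_of_nonneg hx0]
        _ ≤ K ^ l * D * d := by nlinarith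
        _ = d * (K ^ l * D) := by ring
    -- exponents
    have hE1 : -Q ^ 2 * c1 ^ 2 - 2 * Q * c2 * c1 ≤ 0 := by
      nlinarith [sq_nonneg (Q * c1), mul_nonneg (mul_nonneg hQ0 hc2) hc1]
    have hE2 : -P ^ 2 * c1 ^ 2 - 2 * P * c2 * c1 ≤ 0 := by
      nlinarith [sq_nonneg (P * c1), mul_nonneg (mul_nonneg hP0 hc2) hc1]
    have hplim : plim c1 c2 (l + 1) x =
        Real.exp (-Q ^ 2 * c1 ^ 2 - 2 * Q * c2 * c1) := by
      rw [hQdef, plim]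
    have hA0 : 0 ≤ (Q + P) * c1 ^ 2 + 2 * (c2 * c1) := by
      nlinarith [mul_nonneg (add_nonneg hQ0 hP0) (sq_nonneg c1),
        mul_nonneg hc2 hc1]
    have hA1 : (Q + P) * c1 ^ 2 + 2 * (c2 * c1) ≤ 2 * d * c1 ^ 2 + 2 * (c2 * c1) := by
      nlinarith [sq_nonneg c1]
    calc |plim c1 c2 (l + 1) x - p x|
        = |Real.exp (-Q ^ 2 * c1 ^ 2 - 2 * Q * c2 * c1) -
            Real.exp (-P ^ 2 * c1 ^ 2 - 2 * P * c2 * c1)| := by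
          rw [hplim, hfix x hx]
      _ ≤ |(-Q ^ 2 * c1 ^ 2 - 2 * Q * c2 * c1) -
            (-P ^ 2 * c1 ^ 2 - 2 * P * c2 * c1)| := exp_lip hE1 hE2
      _ = |Q - P| * ((Q + P) * c1 ^ 2 + 2 * (c2 * c1)) := by
          rw [show (-Q ^ 2 * c1 ^ 2 - 2 * Q * c2 * c1) -
              (-P ^ 2 * c1 ^ 2 - 2 * P * c2 * c1)
              = (P - Q) * ((Q + P) * c1 ^ 2 + 2 * (c2 * c1)) from by ring,
            abs_mul, abs_sub_comm P Q, abs_of_nonneg hA0]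
      _ ≤ (d * (K ^ l * D)) * (2 * d * c1 ^ 2 + 2 * (c2 * c1)) := by
          apply mul_le_mul hQP hA1 hA0 (by positivity)
      _ = K ^ (l + 1) * D := by rw [hKdef]; ring

private lemma del_nonneg (n : ℕ) (ε : ℝ) : 0 ≤ del n ε := by
  unfold del; positivity

private lemma gam_nonneg (n : ℕ) (ε : ℝ) (i : ℕ) : 0 ≤ gam n ε i :=
  le_trans (by positivity) (le_max_right (del n ε * Phi (i * del n ε) * phi (i * del n ε))
    (del n ε ^ 2 * phi (i * del n ε) ^ 2))

private lemma gam_le (n : ℕ) (ε : ℝ) (i : ℕ) (hd6 : del n ε ≤ 1 / 6) :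
    gam n ε i ≤ del n ε / 2 := by
  have hd0 : 0 ≤ del n ε := del_nonneg n ε
  have hcc : Phi (i * del n ε) * phi (i * del n ε) ≤ 1 / 2 := Phi_mul_phi_le _
  have hc2 : 0 ≤ Phi (i * del n ε) := Phi_nonneg (mul_nonneg (Nat.cast_nonneg i) hd0)
  have hc1 : 0 < phi (i * del n ε) := phi_pos _
  have hc1' : phi (i * del n ε) ≤ 1 := phi_le_one _
  apply max_le
  · calc del n ε * Phi (i * del n ε) * phi (i * del n ε)
        = del n ε * (Phi (i * del n ε) * phi (i * del n ε)) := by ring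
      _ ≤ del n ε * (1 / 2) := by
          exact mul_le_mul_of_nonneg_left hcc hd0
      _ = del n ε / 2 := by ring
  · have h1 : phi (↑i * del n ε) ^ 2 ≤ 1 := by nlinarith
    have h2 : del n ε ^ 2 ≤ del n ε / 6 := by nlinarith
    have h3 := mul_le_mul_of_nonneg_left h1 (by positivity : (0:ℝ) ≤ del n ε ^ 2)
    linarith
  
private lemma Gam_ge (n : ℕ) (ε : ℝ) (i : ℕ) : (n : ℝ) ^ (-30 * ε) ≤ Gam n ε i := by
  induction i with
  | zero => exact le_refl _
  | succ i ih =>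
    have h1 : 0 ≤ gam n ε i := gam_nonneg n ε i
    have h0 : (0:ℝ) ≤ (n : ℝ) ^ (-30 * ε) := by positivity
    calc (n : ℝ) ^ (-30 * ε) ≤ Gam n ε i := ih
      _ ≤ Gam n ε i * (1 + 10 * gam n ε i) :=
          le_mul_of_one_le_right (h0.trans ih) (by linarith)
      _ = Gam n ε (i + 1) := by rw [Gam]

private lemma master (ε : ℝ) (n : ℕ) (L : ℕ) (hL : L = 40 ∨ L = 41)
    (hd0 : 0 < del n ε) (hd6 : del n ε ≤ 1 / 6) (i : ℕ)
    (p : ℝ → ℝ) (hp : ContinuousOn p (Set.Icc 0 (del n ε)))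
    (hfix : ∀ x ∈ Set.Icc (0:ℝ) (del n ε),
      p x = Real.exp (-(∫ y in (0:ℝ)..x, p y) ^ 2 * phi (i * del n ε) ^ 2 -
        2 * (∫ y in (0:ℝ)..x, p y) * Phi (i * del n ε) * phi (i * del n ε))) :
    ∀ x ∈ Set.Icc (0:ℝ) (del n ε),
      |plim (phi (i * del n ε)) (Phi (i * del n ε)) L x - p x|
        ≤ (2 * del n ε) ^ 40 * (3 * gam n ε i) ∧
      1 / 2 ≤ p x ∧ p x ≤ 1 ∧ |p x - 1| ≤ 2 * del n ε := by
  intro x hx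
  set c1 := phi (i * del n ε) with hc1def
  set c2 := Phi (i * del n ε) with hc2def
  set d := del n ε with hddef
  set γ := gam n ε i with hgdef
  have hc1 : 0 ≤ c1 := (phi_pos _).le
  have hc1' : c1 ≤ 1 := phi_le_one _
  have hc2 : 0 ≤ c2 := Phi_nonneg (mul_nonneg (Nat.cast_nonneg i) hd0.le)
  have hcc : c2 * c1 ≤ 1 / 2 := Phi_mul_phi_le _
  have hcc0 : 0 ≤ c2 * c1 := mul_nonneg hc2 hc1
  have hg1 : d ^ 2 * c1 ^ 2 ≤ γ := le_max_right _ _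
  have hg2 : d * (c2 * c1) ≤ γ := by
    calc d * (c2 * c1) = d * c2 * c1 := by ring
      _ ≤ γ := le_max_left _ _
  have hg0 : 0 ≤ γ := gam_nonneg n ε i
  have hghalf : γ ≤ d / 2 := gam_le n ε i hd6
  have hkey := key c1 c2 d hc1 hc1' hc2 hd0.le p hp hfix
  set K := 2 * d ^ 2 * c1 ^ 2 + 2 * d * (c2 * c1) with hKdef
  set D := d ^ 2 * c1 ^ 2 + 2 * d * (c2 * c1) with hDdef
  have hK0 : 0 ≤ K := by nlinarith [sq_nonneg (d * c1)]
  have hD0 : 0 ≤ D := by nlinarith [sq_nonneg (d * c1)]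
  have hK2d : K ≤ 2 * d := by nlinarith
  have hK1 : K ≤ 1 := by linarith
  have hD3 : D ≤ 3 * γ := by linarith
  have h2d0 : (0:ℝ) ≤ 2 * d := by linarith
  have hKL : K ^ L ≤ (2 * d) ^ 40 := by
    rcases hL with h | h <;> subst h
    · exact pow_le_pow_left₀ hK0 hK2d 40
    · calc K ^ 41 = K ^ 40 * K := by ring
        _ ≤ (2 * d) ^ 40 * 1 :=
            mul_le_mul (pow_le_pow_left₀ hK0 hK2d 40) hK1 hK0 (pow_nonneg h2d0 40)
        _ = (2 * d) ^ 40 := mul_one _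
  have hmain : |plim c1 c2 L x - p x| ≤ (2 * d) ^ 40 * (3 * γ) := by
    calc |plim c1 c2 L x - p x| ≤ K ^ L * D := hkey L x hx
      _ ≤ (2 * d) ^ 40 * (3 * γ) :=
          mul_le_mul hKL hD3 hD0 (pow_nonneg h2d0 40)
  -- p bounds
  have h0 := hkey 0 x hx
  have hplim0 : plim c1 c2 0 x = 1 := rfl
  rw [hplim0, pow_zero, one_mul] at h0
  rw [abs_le] at h0
  have hD14 : D ≤ 1 / 4 := by linarith
  have hp1 : p x ≤ 1 := (p_basic c1 c2 d hc1 hc2 p hp hfix x hx).2.1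
  refine ⟨hmain, by linarith [h0.1, h0.2], hp1, ?_⟩
  rw [abs_of_nonpos (by linarith), neg_sub]
  linarith [h0.1]

private lemma del_tendsto (ε : ℝ) (hε0 : 0 < ε) :
    Tendsto (fun n : ℕ => del n ε) atTop (nhds 0) := by
  have h1 : Tendsto (fun n : ℕ => (⌊(n:ℝ) ^ ε⌋₊ : ℝ)) atTop atTop :=
    tendsto_natCast_atTop_atTop.comp
      (tendsto_nat_floor_atTop.comp ((tendsto_rpow_atTop hε0).comp tendsto_natCast_atTop_atTop))
  have h2 : Tendsto (fun n : ℕ => (⌊(n:ℝ) ^ ε⌋₊ : ℝ)⁻¹) atTop (nhds 0) :=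
    h1.inv_tendsto_atTop
  simpa [del, one_div] using h2

private lemma good_eventually (ε : ℝ) (hε0 : 0 < ε) :
    ∀ᶠ n : ℕ in atTop, 0 < del n ε ∧ del n ε ≤ 1 / 6 ∧
      del n ε ≤ 2 * (n : ℝ) ^ (-ε) ∧ (3:ℝ) * 8 ^ 40 ≤ (n : ℝ) ^ (5 * ε) ∧
      (0:ℝ) < (n : ℝ) := by
  have hA : Tendsto (fun n : ℕ => (n : ℝ) ^ ε) atTop atTop :=
    (tendsto_rpow_atTop hε0).comp tendsto_natCast_atTop_atTop
  have hB : Tendsto (fun n : ℕ => (n : ℝ) ^ (5 * ε)) atTop atTop :=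
    (tendsto_rpow_atTop (by positivity)).comp tendsto_natCast_atTop_atTop
  filter_upwards [hA.eventually_ge_atTop 7, hB.eventually_ge_atTop (3 * 8 ^ 40),
    eventually_ge_atTop 1] with n h7 h8 hn1
  have hn0 : (0:ℝ) < (n : ℝ) := by exact_mod_cast Nat.lt_of_lt_of_le Nat.zero_lt_one hn1
  have h6 : (6:ℕ) ≤ ⌊(n:ℝ) ^ ε⌋₊ := Nat.le_floor (by push_cast; linarith)
  have hfl : (6:ℝ) ≤ (⌊(n:ℝ) ^ ε⌋₊ : ℝ) := by exact_mod_cast h6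
  have hdel0 : 0 < del n ε := by
    unfold del
    apply div_pos one_pos
    linarith
  have hdel6 : del n ε ≤ 1 / 6 := by
    unfold del
    apply one_div_le_one_div_of_le (by norm_num) hfl
  refine ⟨hdel0, hdel6, ?_, h8, hn0⟩
  have h5 : (n:ℝ) ^ ε / 2 ≤ (⌊(n:ℝ) ^ ε⌋₊ : ℝ) := by
    have := Nat.sub_one_lt_floor ((n:ℝ) ^ ε)
    linarith
  have hpos : 0 < (n:ℝ) ^ ε / 2 := by linarith
  have heq : 1 / ((n:ℝ) ^ ε / 2) = 2 * ((n:ℝ) ^ ε)⁻¹ := by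
    field_simp
  calc del n ε = 1 / (⌊(n:ℝ) ^ ε⌋₊ : ℝ) := rfl
    _ ≤ 1 / ((n:ℝ) ^ ε / 2) := one_div_le_one_div_of_le hpos h5
    _ = 2 * ((n:ℝ) ^ ε)⁻¹ := heq
    _ = 2 * (n:ℝ) ^ (-ε) := by rw [← Real.rpow_neg (Nat.cast_nonneg n)]

private lemma rpow_split (ε : ℝ) (n : ℕ) (hn0 : (0:ℝ) < (n:ℝ)) :
    ((n:ℝ) ^ (-ε)) ^ (40:ℕ) = (n:ℝ) ^ (-(10 * ε)) * (n:ℝ) ^ (-30 * ε) := by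
  rw [← Real.rpow_natCast ((n:ℝ) ^ (-ε)) 40, ← Real.rpow_mul (Nat.cast_nonneg n),
    ← Real.rpow_add hn0]
  congr 1
  push_cast
  ring

/-- For `L ∈ {40,41}`, sufficiently large `n`, `0 ≤ i < I`
and `x ∈ [0,δ]`: `|p_L(x) - p(x)| ≤ n^{-36ε}` where `p` is the fixed point of
the survival recursion; moreover `p → 1` uniformly, so
`p_L(x) = p(x)(1 ± h(n)Γ(i)γ(i))` for some `h(n) → 0`. -/
theorem pL_close_to_fixed_point
    (ε : ℝ) (hε0 : 0 < ε) (hε1 : ε < 1 / 10 ^ 10)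
    (L : ℕ) (hL : L = 40 ∨ L = 41) :
    (∃ N : ℕ, ∀ n ≥ N, ∀ i < Inat n ε, ∀ p : ℝ → ℝ,
      ContinuousOn p (Set.Icc 0 (del n ε)) →
      (∀ x ∈ Set.Icc (0 : ℝ) (del n ε),
        p x = Real.exp (-(∫ y in (0:ℝ)..x, p y) ^ 2 * phi (i * del n ε) ^ 2 -
          2 * (∫ y in (0:ℝ)..x, p y) * Phi (i * del n ε) * phi (i * del n ε))) →
      ∀ x ∈ Set.Icc (0 : ℝ) (del n ε),
        |plim (phi (i * del n ε)) (Phi (i * del n ε)) L x - p x| ≤ (n : ℝ) ^ (-36 * ε)) ∧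
    (∀ ξ : ℝ, 0 < ξ → ∃ N : ℕ, ∀ n ≥ N, ∀ i < Inat n ε, ∀ p : ℝ → ℝ,
      ContinuousOn p (Set.Icc 0 (del n ε)) →
      (∀ x ∈ Set.Icc (0 : ℝ) (del n ε),
        p x = Real.exp (-(∫ y in (0:ℝ)..x, p y) ^ 2 * phi (i * del n ε) ^ 2 -
          2 * (∫ y in (0:ℝ)..x, p y) * Phi (i * del n ε) * phi (i * del n ε))) →
      ∀ x ∈ Set.Icc (0 : ℝ) (del n ε), |p x - 1| ≤ ξ) ∧
    (∃ h : ℕ → ℝ, Tendsto h atTop (nhds 0) ∧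
      ∃ N : ℕ, ∀ n ≥ N, ∀ i < Inat n ε, ∀ p : ℝ → ℝ,
        ContinuousOn p (Set.Icc 0 (del n ε)) →
        (∀ x ∈ Set.Icc (0 : ℝ) (del n ε),
          p x = Real.exp (-(∫ y in (0:ℝ)..x, p y) ^ 2 * phi (i * del n ε) ^ 2 -
            2 * (∫ y in (0:ℝ)..x, p y) * Phi (i * del n ε) * phi (i * del n ε))) →
        ∀ x ∈ Set.Icc (0 : ℝ) (del n ε),
          within (plim (phi (i * del n ε)) (Phi (i * del n ε)) L x) (p x)
            (h n * Gam n ε i * gam n ε i)) := by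

  obtain ⟨N1, hN1⟩ := eventually_atTop.1 (good_eventually ε hε0)
  refine ⟨⟨N1, ?_⟩, ?_, ?_⟩
  · -- Part 1
    intro n hn i _ p hp hfix x hx
    obtain ⟨hd0, hd6, hd2, h58, hn0⟩ := hN1 n hn
    have hm := master ε n L hL hd0 hd6 i p hp hfix x hx
    have hγ0 : 0 ≤ gam n ε i := gam_nonneg n ε i
    have hγd : gam n ε i ≤ del n ε / 2 := gam_le n ε i hd6
    have hA0 : (0:ℝ) ≤ (n:ℝ) ^ (-ε) := Real.rpow_nonneg (Nat.cast_nonneg n) _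
    have h1 : (2 * del n ε) ^ 40 * (3 * gam n ε i) ≤ (n : ℝ) ^ (-36 * ε) := by
      have hs1 : (2 * del n ε) ^ 40 ≤ (4 * (n:ℝ) ^ (-ε)) ^ 40 :=
        pow_le_pow_left₀ (by linarith) (by linarith) 40
      have hs2 : 3 * gam n ε i ≤ 3 * (n:ℝ) ^ (-ε) := by linarith
      have hA41 : ((n:ℝ) ^ (-ε)) ^ (40:ℕ) * ((n:ℝ) ^ (-ε)) = (n:ℝ) ^ (-36 * ε - 5 * ε) := by
        rw [← Real.rpow_natCast ((n:ℝ) ^ (-ε)) 40, ← Real.rpow_mul (Nat.cast_nonneg n),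
          ← Real.rpow_add hn0]
        congr 1
        push_cast
        ring
      calc (2 * del n ε) ^ 40 * (3 * gam n ε i)
          ≤ (4 * (n:ℝ) ^ (-ε)) ^ 40 * (3 * (n:ℝ) ^ (-ε)) :=
            mul_le_mul hs1 hs2 (by linarith) (pow_nonneg (by linarith) 40)
        _ = 3 * 4 ^ 40 * (((n:ℝ) ^ (-ε)) ^ (40:ℕ) * ((n:ℝ) ^ (-ε))) := by ring
        _ = 3 * 4 ^ 40 * (n:ℝ) ^ (-36 * ε - 5 * ε) := by rw [hA41]
        _ ≤ (n:ℝ) ^ (5 * ε) * (n:ℝ) ^ (-36 * ε - 5 * ε) := by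
            have h0 : (0:ℝ) ≤ (n:ℝ) ^ (-36 * ε - 5 * ε) :=
              Real.rpow_nonneg (Nat.cast_nonneg n) _
            have : (3:ℝ) * 4 ^ 40 ≤ (n:ℝ) ^ (5 * ε) := le_trans (by norm_num) h58
            exact mul_le_mul_of_nonneg_right this h0
        _ = (n:ℝ) ^ (-36 * ε) := by
            rw [← Real.rpow_add hn0]
            congr 1
            ring
    exact hm.1.trans h1
  · -- Part 2
    intro ξ hξ
    obtain ⟨N2, hN2⟩ := eventually_atTop.1
      ((good_eventually ε hε0).and
        (((del_tendsto ε hε0).eventually_le_const (show (0:ℝ) < ξ / 4 by linarith))))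
    refine ⟨N2, ?_⟩
    intro n hn i _ p hp hfix x hx
    obtain ⟨⟨hd0, hd6, _, _, _⟩, hdξ⟩ := hN2 n hn
    have hm := master ε n L hL hd0 hd6 i p hp hfix x hx
    calc |p x - 1| ≤ 2 * del n ε := hm.2.2.2
      _ ≤ ξ := by linarith
  · -- Part 3
    refine ⟨fun n => (8:ℝ) ^ 42 * (n:ℝ) ^ (-(10 * ε)), ?_, N1, ?_⟩
    · have h1 : Tendsto (fun n : ℕ => (n:ℝ) ^ (-(10 * ε))) atTop (nhds 0) :=
        (tendsto_rpow_neg_atTop (by positivity)).comp tendsto_natCast_atTop_atTop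
      have h2 := h1.const_mul ((8:ℝ) ^ 42)
      simpa using h2
    intro n hn i _ p hp hfix x hx
    obtain ⟨hd0, hd6, hd2, h58, hn0⟩ := hN1 n hn
    have hm := master ε n L hL hd0 hd6 i p hp hfix x hx
    have hγ0 : 0 ≤ gam n ε i := gam_nonneg n ε i
    have hγd : gam n ε i ≤ del n ε / 2 := gam_le n ε i hd6
    have hA0 : (0:ℝ) ≤ (n:ℝ) ^ (-ε) := Real.rpow_nonneg (Nat.cast_nonneg n) _
    have hu0 : (0:ℝ) ≤ (n:ℝ) ^ (-(10 * ε)) := Real.rpow_nonneg (Nat.cast_nonneg n) _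
    have hv0 : (0:ℝ) ≤ (n:ℝ) ^ (-30 * ε) := Real.rpow_nonneg (Nat.cast_nonneg n) _
    have hG : (n:ℝ) ^ (-30 * ε) ≤ Gam n ε i := Gam_ge n ε i
    have hG0 : 0 ≤ Gam n ε i := hv0.trans hG
    set b := (8:ℝ) ^ 42 * (n:ℝ) ^ (-(10 * ε)) * Gam n ε i * gam n ε i with hbdef
    have hb0 : 0 ≤ b := by positivity
    have hbound : (2 * del n ε) ^ 40 * (3 * gam n ε i) ≤ p x * b := by
      have hs1 : (2 * del n ε) ^ 40 ≤ (4 * (n:ℝ) ^ (-ε)) ^ 40 :=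
        pow_le_pow_left₀ (by linarith) (by linarith) 40
      have hstep : (2 * del n ε) ^ 40 * (3 * gam n ε i)
          ≤ 3 * 4 ^ 40 * (((n:ℝ) ^ (-ε)) ^ (40:ℕ) * gam n ε i) := by
        calc (2 * del n ε) ^ 40 * (3 * gam n ε i)
            ≤ (4 * (n:ℝ) ^ (-ε)) ^ 40 * (3 * gam n ε i) :=
              mul_le_mul_of_nonneg_right hs1 (by linarith)
          _ = 3 * 4 ^ 40 * (((n:ℝ) ^ (-ε)) ^ (40:ℕ) * gam n ε i) := by ring
      have hsplit : ((n:ℝ) ^ (-ε)) ^ (40:ℕ) * gam n ε i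
          = (n:ℝ) ^ (-(10 * ε)) * ((n:ℝ) ^ (-30 * ε) * gam n ε i) := by
        rw [rpow_split ε n hn0]
        ring
      have hfinal : 3 * 4 ^ 40 * (((n:ℝ) ^ (-ε)) ^ (40:ℕ) * gam n ε i) ≤ p x * b := by
        rw [hsplit]
        have h12 : (1:ℝ) / 2 ≤ p x := hm.2.1
        have hb1 : (8:ℝ) ^ 42 * (n:ℝ) ^ (-(10 * ε)) * ((n:ℝ) ^ (-30 * ε) * gam n ε i) ≤ b := by
          rw [hbdef]
          have h1 : (n:ℝ) ^ (-30 * ε) * gam n ε i ≤ Gam n ε i * gam n ε i :=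
            mul_le_mul_of_nonneg_right hG hγ0
          have h2 : (0:ℝ) ≤ (8:ℝ) ^ 42 * (n:ℝ) ^ (-(10 * ε)) := by positivity
          calc (8:ℝ) ^ 42 * (n:ℝ) ^ (-(10 * ε)) * ((n:ℝ) ^ (-30 * ε) * gam n ε i)
              ≤ (8:ℝ) ^ 42 * (n:ℝ) ^ (-(10 * ε)) * (Gam n ε i * gam n ε i) :=
                mul_le_mul_of_nonneg_left h1 h2
            _ = (8:ℝ) ^ 42 * (n:ℝ) ^ (-(10 * ε)) * Gam n ε i * gam n ε i := by ring
        have hvγ : (0:ℝ) ≤ (n:ℝ) ^ (-(10 * ε)) * ((n:ℝ) ^ (-30 * ε) * gam n ε i) := by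
          positivity
        calc 3 * 4 ^ 40 * ((n:ℝ) ^ (-(10 * ε)) * ((n:ℝ) ^ (-30 * ε) * gam n ε i))
            ≤ (1 / 2) * ((8:ℝ) ^ 42 * ((n:ℝ) ^ (-(10 * ε)) * ((n:ℝ) ^ (-30 * ε) * gam n ε i))) := by
              nlinarith [hvγ]
          _ = (1 / 2) * ((8:ℝ) ^ 42 * (n:ℝ) ^ (-(10 * ε)) * ((n:ℝ) ^ (-30 * ε) * gam n ε i)) := by
              ring
          _ ≤ p x * b := by
              apply mul_le_mul h12 hb1 _ (by linarith)
              positivity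
      exact hstep.trans hfinal
    have habs : |plim (phi (i * del n ε)) (Phi (i * del n ε)) L x - p x| ≤ p x * b :=
      hm.1.trans hbound
    rw [abs_le] at habs
    exact ⟨by nlinarith [habs.1], by nlinarith [habs.2]⟩

end
end TF
end
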